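/- arXiv:2311.05901 — 9 statements merged into one kernel-verified Lean document; each statement's English description precedes it below -/
import Mathlib

section
/- For every n ≥ 1, the chromatic number π_n of the n-dimensional permutohedron equals n; that is, the least m for which there exists a proper colouring of the facets of the n-dimensional permutohedron with m colours is exactly n. -/
/-- A facet of the `n`-dimensional permutohedron: a nonempty proper subset of
`[n]₀ = {0,1,...,n}`. -/
def PermFacet (n : ℕ) (X : Finset ℕ) : Prop :=
  X.Nonempty ∧ X ⊂ Finset.range (n + 1)

/-- Two facets of the permutohedron are separated when they are incomparable
with respect to inclusion. -/
def PermSeparated (X Y : Finset ℕ) : Prop :=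
  ¬ X ⊆ Y ∧ ¬ Y ⊆ X

/-- A proper colouring of the facets of the `n`-dimensional permutohedron with
`m` colours: any two distinct facets of the same colour are separated. -/
def IsProperColouringPerm (n m : ℕ) (f : Finset ℕ → ℕ) : Prop :=
  (∀ X, PermFacet n X → f X ∈ Finset.Icc 1 m) ∧
  ∀ X Y, PermFacet n X → PermFacet n Y → X ≠ Y → f X = f Y → PermSeparated X Y

lemma range_ssub {a b : ℕ} (h : a < b) : Finset.range a ⊂ Finset.range b :=
  ⟨Finset.range_subset_range.mpr h.le, fun hsub => absurd (Finset.range_subset_range.mp hsub) (by omega)⟩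

/-- The chromatic number of the `n`-dimensional permutohedron equals `n`. -/
theorem permutohedron_chromatic_number (n : ℕ) (hn : 1 ≤ n) :
    IsLeast {m : ℕ | ∃ f : Finset ℕ → ℕ, IsProperColouringPerm n m f} n := by
  constructor
  · -- colouring by cardinality works with n colours
    refine ⟨fun X => X.card, ?_, ?_⟩
    · rintro X ⟨hne, hsub⟩
      have h1 : 1 ≤ X.card := Finset.card_pos.mpr hne
      have h2 : X.card < (Finset.range (n + 1)).card := Finset.card_lt_card hsub
      rw [Finset.card_range] at h2
      dsimp only
      exact Finset.mem_Icc.mpr ⟨h1, by omega⟩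
    · intro X Y _ _ hXY hcard
      change X.card = Y.card at hcard
      refine ⟨fun h => hXY ?_, fun h => hXY ?_⟩
      · exact Finset.eq_of_subset_of_card_le h (le_of_eq hcard.symm)
      · exact (Finset.eq_of_subset_of_card_le h (le_of_eq hcard)).symm
  · -- lower bound: the chain range 1 ⊂ ... ⊂ range n needs n colours
    rintro m ⟨f, hIcc, hsep⟩
    have key : Set.InjOn (fun k => f (Finset.range (k + 1))) (Finset.range n) := by
      intro a ha b hb hab
      simp only [Finset.coe_range, Set.mem_Iio] at ha hb
      by_contra hne
      have hfacet : ∀ k, k < n → PermFacet n (Finset.range (k + 1)) := by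
        intro k hk
        exact ⟨⟨0, Finset.mem_range.mpr (Nat.succ_pos k)⟩,
          range_ssub (by omega)⟩
      have hXY : Finset.range (a + 1) ≠ Finset.range (b + 1) := by
        intro h
        apply hne
        have := congrArg Finset.card h
        simp [Finset.card_range] at this
        omega
      have hsep' := hsep _ _ (hfacet a ha) (hfacet b hb) hXY hab
      rcases Nat.le_total a b with h | h
      · exact hsep'.1 (Finset.range_subset_range.mpr (by omega))
      · exact hsep'.2 (Finset.range_subset_range.mpr (by omega))
    have himg : ∀ k ∈ Finset.range n, f (Finset.range (k + 1)) ∈ Finset.Icc 1 m := by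
      intro k hk
      rw [Finset.mem_range] at hk
      exact hIcc _ ⟨⟨0, Finset.mem_range.mpr (Nat.succ_pos k)⟩,
        range_ssub (by omega : k + 1 < n + 1)⟩
    have := Finset.card_le_card_of_injOn _ himg key
    simpa using this
end

section
/- Let 𝓑 be a building set on [n]₀ with [n]₀ ∈ 𝓑, and let X and Y be two distinct elements of 𝓑 that are proper subsets of [n]₀. Then there is no nested set with respect to 𝓑 containing both X and Y if and only if X and Y are incomparable with respect to inclusion and X ∪ Y ∈ 𝓑. -/
/-- A building set on `[n]₀ = {0,1,...,n}`: a collection of nonempty subsets of `[n]₀`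
containing all singletons and closed under unions of intersecting members. -/
def IsBuildingSet (n : ℕ) (B : Set (Finset ℕ)) : Prop :=
  (∀ S ∈ B, S.Nonempty ∧ S ⊆ Finset.range (n + 1)) ∧
  (∀ x, x < n + 1 → ({x} : Finset ℕ) ∈ B) ∧
  ∀ S₁ ∈ B, ∀ S₂ ∈ B, (S₁ ∩ S₂).Nonempty → S₁ ∪ S₂ ∈ B

/-- `N ⊆ B` is a nested set with respect to the building set `B` when the union of every
`N`-antichain (a family of at least two mutually incomparable members of `N`) is not an
element of `B`. -/
def IsNestedSet (B N : Set (Finset ℕ)) : Prop :=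
  N ⊆ B ∧
  ∀ W : Finset (Finset ℕ), ↑W ⊆ N → 2 ≤ W.card →
    (∀ X ∈ W, ∀ Y ∈ W, X ≠ Y → ¬ X ⊆ Y) → W.sup id ∉ B

/-- Two facets (distinct proper members of the building set) are contained in no common
nested set if and only if they are incomparable and their union belongs to the
building set. -/
theorem separated_iff_incomparable_union_in_building (n : ℕ) (hn : 1 ≤ n)
    (B : Set (Finset ℕ)) (hB : IsBuildingSet n B) (hfull : Finset.range (n + 1) ∈ B)
    (X Y : Finset ℕ) (hX : X ∈ B) (hY : Y ∈ B) (hXY : X ≠ Y)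
    (hXp : X ⊂ Finset.range (n + 1)) (hYp : Y ⊂ Finset.range (n + 1)) :
    (¬ ∃ N : Set (Finset ℕ), IsNestedSet B N ∧ X ∈ N ∧ Y ∈ N) ↔
      (¬ X ⊆ Y ∧ ¬ Y ⊆ X ∧ X ∪ Y ∈ B) := by

  constructor
  · intro hno
    by_contra hR
    apply hno
    refine ⟨{X, Y}, ⟨?_, ?_⟩, Or.inl rfl, Or.inr rfl⟩
    · intro S hS
      rcases hS with h | h <;> simp_all
    · intro W hWN hW2 hanti
      have hWsub : W ⊆ ({X, Y} : Finset (Finset ℕ)) := by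
        intro s hs
        have := hWN hs
        simp only [Set.mem_insert_iff, Set.mem_singleton_iff] at this
        simp [this]
      have hcard : ({X, Y} : Finset (Finset ℕ)).card ≤ 2 := Finset.card_insert_le _ _ |>.trans (by simp)
      have hWeq : W = ({X, Y} : Finset (Finset ℕ)) :=
        Finset.eq_of_subset_of_card_le hWsub (hcard.trans hW2)
      subst hWeq
      have hXW : X ∈ ({X, Y} : Finset (Finset ℕ)) := by simp
      have hYW : Y ∈ ({X, Y} : Finset (Finset ℕ)) := by simp
      push_neg at hR
      by_cases h1 : X ⊆ Y
      · exact absurd h1 (hanti X hXW Y hYW hXY)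
      by_cases h2 : Y ⊆ X
      · exact absurd h2 (hanti Y hYW X hXW hXY.symm)
      have hU := hR h1 h2
      simpa [Finset.sup_insert, Finset.sup_singleton] using hU
  · rintro ⟨hns1, hns2, hU⟩ ⟨N, ⟨hNB, hN⟩, hXN, hYN⟩
    have h2 : 2 ≤ ({X, Y} : Finset (Finset ℕ)).card := by
      rw [Finset.card_insert_of_notMem (by simpa using hXY), Finset.card_singleton]
    have := hN {X, Y} ?_ h2 ?_
    · apply this
      simpa [Finset.sup_insert, Finset.sup_singleton] using hU
    · intro s hs
      simp only [Finset.coe_insert, Finset.coe_singleton, Set.mem_insert_iff,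
        Set.mem_singleton_iff] at hs
      rcases hs with h | h <;> subst h <;> assumption
    · intro A hA Bb hB' hne
      simp only [Finset.mem_insert, Finset.mem_singleton] at hA hB'
      rcases hA with rfl | rfl <;> rcases hB' with rfl | rfl <;> simp_all
end

section
/- Let X₁,...,X_k be pairwise separated segments of [n]₀. Then for all i, j, l ∈ {1,...,k}, if X_i ∩ X_j = X_i ∩ X_l then j = l. -/
/-- A segment of `[n]₀ = {0,...,n}`: a set `[a,b] = {x : a ≤ x ≤ b}` with
`0 ≤ a ≤ b ≤ n` that is a proper subset of `[n]₀`. -/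
def IsSegment (n : ℕ) (S : Finset ℕ) : Prop :=
  ∃ a b : ℕ, a ≤ b ∧ b ≤ n ∧ S = Finset.Icc a b ∧ S ⊂ Finset.range (n + 1)

/-- The segment `[a,b]` precedes the segment `[c,d]` when `a+1 ≤ c ≤ b+1` and `b < d`. -/
def SegPrecedes (n : ℕ) (S T : Finset ℕ) : Prop :=
  ∃ a b c d : ℕ, a ≤ b ∧ b ≤ n ∧ c ≤ d ∧ d ≤ n ∧
    S = Finset.Icc a b ∧ T = Finset.Icc c d ∧ a + 1 ≤ c ∧ c ≤ b + 1 ∧ b < d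

/-- Two segments are separated when one of them precedes the other. -/
def SegSeparated (n : ℕ) (S T : Finset ℕ) : Prop :=
  SegPrecedes n S T ∨ SegPrecedes n T S

/-- A proper colouring of the `n`-dimensional associahedron with `m` colours:
a function from the segments of `[n]₀` to `{1,...,m}` such that any two distinct
segments of the same colour are separated. -/
def IsProperColouringAssoc (n m : ℕ) (f : Finset ℕ → ℕ) : Prop :=
  (∀ S, IsSegment n S → f S ∈ Finset.Icc 1 m) ∧
  ∀ S T, IsSegment n S → IsSegment n T → S ≠ T → f S = f T → SegSeparated n S T

/-- The chromatic number `α_n` of the `n`-dimensional associahedron: the least `m`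
for which a proper colouring with `m` colours exists. -/
noncomputable def assocChromatic (n : ℕ) : ℕ :=
  sInf {m : ℕ | ∃ f : Finset ℕ → ℕ, IsProperColouringAssoc n m f}


private lemma Icc_eq_nat {a b c d : ℕ} (hab : a ≤ b) (hcd : c ≤ d)
    (h : Finset.Icc a b = Finset.Icc c d) : a = c ∧ b = d := by
  have h1 : a ∈ Finset.Icc c d := h ▸ Finset.mem_Icc.mpr ⟨le_rfl, hab⟩
  have h2 : b ∈ Finset.Icc c d := h ▸ Finset.mem_Icc.mpr ⟨hab, le_rfl⟩
  have h3 : c ∈ Finset.Icc a b := h.symm ▸ Finset.mem_Icc.mpr ⟨le_rfl, hcd⟩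
  have h4 : d ∈ Finset.Icc a b := h.symm ▸ Finset.mem_Icc.mpr ⟨hcd, le_rfl⟩
  simp only [Finset.mem_Icc] at h1 h2 h3 h4
  omega

private lemma sep_ineq {n : ℕ} {S T : Finset ℕ} {a b c d : ℕ}
    (hab : a ≤ b) (hcd : c ≤ d) (hS : S = Finset.Icc a b) (hT : T = Finset.Icc c d)
    (h : SegSeparated n S T) :
    (a + 1 ≤ c ∧ c ≤ b + 1 ∧ b < d) ∨ (c + 1 ≤ a ∧ a ≤ d + 1 ∧ d < b) := by
  rcases h with ⟨a',b',c',d',h1,_,h3,_,hS',hT',p1,p2,p3⟩ |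
    ⟨c',d',a',b',h3,_,h1,_,hT',hS',p1,p2,p3⟩ <;>
  · obtain ⟨e1,e2⟩ := Icc_eq_nat hab h1 (hS ▸ hS')
    obtain ⟨e3,e4⟩ := Icc_eq_nat hcd h3 (hT ▸ hT')
    omega

/-- Corollary 1: if `X₁, ..., X_k` are pairwise separated segments of `[n]₀`, then
`X_i ∩ X_j = X_i ∩ X_l` implies `j = l`. -/
theorem separated_segments_intersections_distinct
    (n k : ℕ) (hn : 1 ≤ n) (X : Fin k → Finset ℕ)
    (hseg : ∀ i, IsSegment n (X i))
    (hsep : ∀ i j, i ≠ j → SegSeparated n (X i) (X j)) :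
    ∀ i j l : Fin k, X i ∩ X j = X i ∩ X l → j = l := by
  intro i j l h
  by_contra hjl
  obtain ⟨a, b, hab, _, hXi, _⟩ := hseg i
  obtain ⟨c, d, hcd, _, hXj, _⟩ := hseg j
  obtain ⟨e, f, hef, _, hXl, _⟩ := hseg l
  have hm : ∀ x : ℕ, ((a ≤ x ∧ x ≤ b) ∧ (c ≤ x ∧ x ≤ d)) ↔
      ((a ≤ x ∧ x ≤ b) ∧ (e ≤ x ∧ x ≤ f)) := by
    intro x
    have := Finset.ext_iff.mp h x
    simpa [hXi, hXj, hXl, Finset.mem_Icc] using this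
  have sjl := sep_ineq hcd hef hXj hXl (hsep j l hjl)
  have sij : (a = c ∧ b = d) ∨ (a+1 ≤ c ∧ c ≤ b+1 ∧ b < d) ∨ (c+1 ≤ a ∧ a ≤ d+1 ∧ d < b) := by
    by_cases hij : i = j
    · left
      exact Icc_eq_nat hab hcd (by rw [← hXi, hij, hXj])
    · rcases sep_ineq hab hcd hXi hXj (hsep i j hij) with h' | h'
      · exact Or.inr (Or.inl h')
      · exact Or.inr (Or.inr h')
  have sil : (a = e ∧ b = f) ∨ (a+1 ≤ e ∧ e ≤ b+1 ∧ b < f) ∨ (e+1 ≤ a ∧ a ≤ f+1 ∧ f < b) := by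
    by_cases hil : i = l
    · left
      exact Icc_eq_nat hab hef (by rw [← hXi, hil, hXl])
    · rcases sep_ineq hab hef hXi hXl (hsep i l hil) with h' | h'
      · exact Or.inr (Or.inl h')
      · exact Or.inr (Or.inr h')
  have h1 := hm a
  have h2 := hm b
  have h3 := hm c
  have h4 := hm d
  have h5 := hm e
  have h6 := hm f
  omega
end

section
/- Let f be a proper colouring of the n-dimensional associahedron with m colours. Then for every segment X of [n]₀ of cardinality κ, the number of segments Y of [n]₀ with f(Y) = f(X) (including X itself) is at most min{κ+1, n−κ+2}. -/
noncomputable def aeAux (Y : Finset ℕ) : ℕ := sInf (↑Y : Set ℕ)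
def beAux (Y : Finset ℕ) : ℕ := Y.sup id

lemma aeAux_Icc {a b : ℕ} (h : a ≤ b) : aeAux (Finset.Icc a b) = a := by
  apply le_antisymm
  · exact Nat.sInf_le (by simp [h])
  · have hmem := Nat.sInf_mem (s := (↑(Finset.Icc a b) : Set ℕ)) ⟨a, by simp [h]⟩
    simp only [Finset.mem_coe, Finset.mem_Icc] at hmem
    exact hmem.1

lemma beAux_Icc {a b : ℕ} (h : a ≤ b) : beAux (Finset.Icc a b) = b := by
  apply le_antisymm
  · exact Finset.sup_le (fun x hx => by simp only [Finset.mem_Icc] at hx; exact hx.2)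
  · exact Finset.le_sup (f := id) (by simp [h])

lemma prec_endpoints {n : ℕ} {S T : Finset ℕ} (h : SegPrecedes n S T) :
    aeAux S + 1 ≤ aeAux T ∧ aeAux T ≤ beAux S + 1 ∧ beAux S < beAux T := by
  obtain ⟨a, b, c, d, hab, hbn, hcd, hdn, hS, hT, h1, h2, h3⟩ := h
  subst hS; subst hT
  rw [aeAux_Icc hab, aeAux_Icc hcd, beAux_Icc hab, beAux_Icc hcd]
  exact ⟨h1, h2, h3⟩

/-- Proposition 2: in a proper colouring of the `n`-dimensional associahedron, for a
facet (segment) `X` of cardinality `κ`, the number of segments `Y` with `f Y = f X`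
(including `X` itself) is at most `min (κ + 1) (n - κ + 2)`. -/
theorem colour_class_size_bound (n m : ℕ) (hn : 1 ≤ n) (f : Finset ℕ → ℕ)
    (hf : IsProperColouringAssoc n m f) (X : Finset ℕ) (hX : IsSegment n X) :
    {Y : Finset ℕ | IsSegment n Y ∧ f Y = f X}.ncard ≤
      min (X.card + 1) (n - X.card + 2) := by
  classical
  have hX' := hX
  obtain ⟨aX, bX, haXb, hbXn, hXeq, hXss⟩ := hX
  have haeX : aeAux X = aX := by rw [hXeq]; exact aeAux_Icc haXb
  have hbeX : beAux X = bX := by rw [hXeq]; exact beAux_Icc haXb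
  have hcardX : X.card = bX + 1 - aX := by rw [hXeq, Nat.card_Icc]
  set C : Set (Finset ℕ) := {Y : Finset ℕ | IsSegment n Y ∧ f Y = f X} with hCdef
  have hfin : C.Finite := by
    apply Set.Finite.subset (Finset.range (n + 1)).powerset.finite_toSet
    intro Y hY
    obtain ⟨⟨a, b, _, _, _, hsub⟩, _⟩ := hY
    simp only [Finset.mem_coe, Finset.mem_powerset]
    exact hsub.subset
  have hncard : C.ncard = hfin.toFinset.card := Set.ncard_eq_toFinset_card C hfin
  set s : Finset (Finset ℕ) := hfin.toFinset with hsdef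
  have hmem : ∀ Y, Y ∈ s ↔ (IsSegment n Y ∧ f Y = f X) := by
    intro Y; rw [hsdef, Set.Finite.mem_toFinset]; exact Iff.rfl
  have hXs : X ∈ s := (hmem X).2 ⟨hX', rfl⟩
  -- basic endpoint facts for members of s
  have hYfacts : ∀ Y ∈ s, Y = Finset.Icc (aeAux Y) (beAux Y) ∧ aeAux Y ≤ beAux Y ∧ beAux Y ≤ n := by
    intro Y hY
    obtain ⟨a, b, hab, hbn, hEq, _⟩ := ((hmem Y).1 hY).1
    have h1 : aeAux Y = a := by rw [hEq]; exact aeAux_Icc hab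
    have h2 : beAux Y = b := by rw [hEq]; exact beAux_Icc hab
    refine ⟨by rw [h1, h2]; exact hEq, by omega, by omega⟩
  have hsep : ∀ Y ∈ s, ∀ Z ∈ s, Y ≠ Z →
      (aeAux Y + 1 ≤ aeAux Z ∧ aeAux Z ≤ beAux Y + 1 ∧ beAux Y < beAux Z) ∨
      (aeAux Z + 1 ≤ aeAux Y ∧ aeAux Y ≤ beAux Z + 1 ∧ beAux Z < beAux Y) := by
    intro Y hY Z hZ hne
    have hYC := (hmem Y).1 hY
    have hZC := (hmem Z).1 hZ
    rcases hf.2 Y Z hYC.1 hZC.1 hne (hYC.2.trans hZC.2.symm) with h | h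
    · exact Or.inl (prec_endpoints h)
    · exact Or.inr (prec_endpoints h)
  have hdir : ∀ Y ∈ s, ∀ Z ∈ s, aeAux Y < aeAux Z →
      aeAux Z ≤ beAux Y + 1 ∧ beAux Y < beAux Z := by
    intro Y hY Z hZ hlt
    have hne : Y ≠ Z := by intro h; subst h; omega
    rcases hsep Y hY Z hZ hne with h | h
    · exact ⟨h.2.1, h.2.2⟩
    · omega
  have haeInj : ∀ Y ∈ s, ∀ Z ∈ s, Y ≠ Z → aeAux Y ≠ aeAux Z := by
    intro Y hY Z hZ hne
    rcases hsep Y hY Z hZ hne with h | h <;> omega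
  have hbeInj : ∀ Y ∈ s, ∀ Z ∈ s, Y ≠ Z → beAux Y ≠ beAux Z := by
    intro Y hY Z hZ hne
    rcases hsep Y hY Z hZ hne with h | h <;> omega
  -- the maximum left endpoint
  have hne : (s.image aeAux).Nonempty := ⟨aeAux X, Finset.mem_image_of_mem _ hXs⟩
  set aM : ℕ := (s.image aeAux).max' hne with haMdef
  have haM_ub : ∀ Y ∈ s, aeAux Y ≤ aM :=
    fun Y hY => Finset.le_max' _ _ (Finset.mem_image_of_mem _ hY)
  obtain ⟨v, hvs, hva⟩ : ∃ v ∈ s, aeAux v = aM := by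
    have := (s.image aeAux).max'_mem hne
    rw [Finset.mem_image] at this
    exact this
  have haM_be : ∀ Y ∈ s, aM ≤ beAux Y + 1 := by
    intro Y hY
    by_cases h : Y = v
    · subst h; have := (hYfacts Y hY).2.1; omega
    · have hlt : aeAux Y < aeAux v := by
        have := haM_ub Y hY
        have := haeInj Y hY v hvs h
        omega
      have := (hdir Y hY v hvs hlt).1; omega
  have haXaM : aX ≤ aM := by have := haM_ub X hXs; omega
  have haMbX : aM ≤ bX + 1 := by have := haM_be X hXs; omega
  -- split s at X
  set P : Finset (Finset ℕ) := s.filter (fun Y => aeAux Y ≤ aX) with hPdef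
  set Q : Finset (Finset ℕ) := s.filter (fun Y => ¬ aeAux Y ≤ aX) with hQdef
  have hPQ : P.card + Q.card = s.card := Finset.card_filter_add_card_filter_not _
  have hPcard_be : P.card = (P.image beAux).card := by
    rw [Finset.card_image_of_injOn]
    intro Y hY Z hZ h
    by_contra hne'
    exact hbeInj Y (Finset.mem_of_mem_filter Y hY) Z (Finset.mem_of_mem_filter Z hZ) hne' h
  have hPcard_ae : P.card = (P.image aeAux).card := by
    rw [Finset.card_image_of_injOn]
    intro Y hY Z hZ h
    by_contra hne'
    exact haeInj Y (Finset.mem_of_mem_filter Y hY) Z (Finset.mem_of_mem_filter Z hZ) hne' h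
  have hQcard_be : Q.card = (Q.image beAux).card := by
    rw [Finset.card_image_of_injOn]
    intro Y hY Z hZ h
    by_contra hne'
    exact hbeInj Y (Finset.mem_of_mem_filter Y hY) Z (Finset.mem_of_mem_filter Z hZ) hne' h
  have hQcard_ae : Q.card = (Q.image aeAux).card := by
    rw [Finset.card_image_of_injOn]
    intro Y hY Z hZ h
    by_contra hne'
    exact haeInj Y (Finset.mem_of_mem_filter Y hY) Z (Finset.mem_of_mem_filter Z hZ) hne' h
  -- elements of P have be ≤ bX; elements of Q have ae > aX, X precedes them
  have hPbe : ∀ Y ∈ P, aM - 1 ≤ beAux Y ∧ beAux Y ≤ bX := by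
    intro Y hYP
    rw [hPdef, Finset.mem_filter] at hYP
    obtain ⟨hYs, hYa⟩ := hYP
    constructor
    · have := haM_be Y hYs; omega
    · by_cases h : Y = X
      · subst h; omega
      · have hlt : aeAux Y < aeAux X := by
          have := haeInj Y hYs X hXs h; omega
        have := (hdir Y hYs X hXs hlt).2; omega
  have hQae : ∀ Y ∈ Q, aX + 1 ≤ aeAux Y ∧ aeAux Y ≤ aM := by
    intro Y hYQ
    rw [hQdef, Finset.mem_filter] at hYQ
    exact ⟨by omega, haM_ub Y hYQ.1⟩
  have hQbe : ∀ Y ∈ Q, bX + 1 ≤ beAux Y ∧ beAux Y ≤ n := by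
    intro Y hYQ
    rw [hQdef, Finset.mem_filter] at hYQ
    obtain ⟨hYs, hYa⟩ := hYQ
    have hlt : aeAux X < aeAux Y := by omega
    have := (hdir X hXs Y hYs hlt).2
    have := (hYfacts Y hYs).2.2
    omega
  have hPae : ∀ Y ∈ P, aeAux Y ≤ aX := by
    intro Y hYP
    rw [hPdef, Finset.mem_filter] at hYP
    exact hYP.2
  -- cardinality bounds
  have hP1 : P.card ≤ bX + 2 - aM := by
    rw [hPcard_be]
    have hsub : P.image beAux ⊆ Finset.Icc (aM - 1) bX := by
      intro x hx
      rw [Finset.mem_image] at hx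
      obtain ⟨Y, hY, rfl⟩ := hx
      rw [Finset.mem_Icc]
      exact hPbe Y hY
    have := Finset.card_le_card hsub
    rw [Nat.card_Icc] at this
    omega
  have hQ1 : Q.card ≤ aM - aX := by
    rw [hQcard_ae]
    have hsub : Q.image aeAux ⊆ Finset.Icc (aX + 1) aM := by
      intro x hx
      rw [Finset.mem_image] at hx
      obtain ⟨Y, hY, rfl⟩ := hx
      rw [Finset.mem_Icc]
      exact hQae Y hY
    have := Finset.card_le_card hsub
    rw [Nat.card_Icc] at this
    omega
  have hP2 : P.card ≤ aX + 1 := by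
    rw [hPcard_ae]
    have hsub : P.image aeAux ⊆ Finset.Icc 0 aX := by
      intro x hx
      rw [Finset.mem_image] at hx
      obtain ⟨Y, hY, rfl⟩ := hx
      rw [Finset.mem_Icc]
      exact ⟨Nat.zero_le _, hPae Y hY⟩
    have := Finset.card_le_card hsub
    rw [Nat.card_Icc] at this
    omega
  have hQ2 : Q.card ≤ n - bX := by
    rw [hQcard_be]
    have hsub : Q.image beAux ⊆ Finset.Icc (bX + 1) n := by
      intro x hx
      rw [Finset.mem_image] at hx
      obtain ⟨Y, hY, rfl⟩ := hx
      rw [Finset.mem_Icc]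
      exact hQbe Y hY
    have := Finset.card_le_card hsub
    rw [Nat.card_Icc] at this
    omega
  rw [hncard]
  rw [hcardX]
  refine le_min ?_ ?_
  · omega
  · omega
end

section
/- For every n ≥ 1 there is a proper colouring of the n-dimensional associahedron with Σ_{i=2}^{⌈n/2⌉+1} A_i colours; consequently α_n ≤ Σ_{i=2}^{⌈n/2⌉+1} A_i. -/
/-- The pair `(A_i, B_i)` from the recursion (at argument `j`, the index is `i = j + 2`):
`B₂ = 0`; `B_i = n + 3 + B_{i-1} - (i-1)·A_{i-1}` for `2 < i ≤ ⌈n/2⌉ + 1`;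
`A_i = ⌈(n + 3 + B_i)/i⌉` if `n` is even or `i ≤ ⌈n/2⌉`, and `A_i = 1` if `n` is odd
and `i = ⌈n/2⌉ + 1`.  (Note `⌈n/2⌉ = (n+1)/2` in natural division.) -/
noncomputable def assocAB (n : ℕ) : ℕ → ℤ × ℤ
  | 0 =>
      (if n % 2 = 0 ∨ 2 ≤ (n + 1) / 2 then ⌈((n : ℚ) + 3) / 2⌉ else 1, 0)
  | j + 1 =>
      let p := assocAB n j
      let B : ℤ := (n : ℤ) + 3 + p.2 - ((j : ℤ) + 2) * p.1
      (if n % 2 = 0 ∨ j + 3 ≤ (n + 1) / 2 then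
          ⌈((n : ℚ) + 3 + (B : ℚ)) / ((j : ℚ) + 3)⌉
        else 1, B)

/-- `A_i` from the recursion above, for `i ≥ 2`. -/
noncomputable def assocA (n i : ℕ) : ℤ := (assocAB n (i - 2)).1

namespace AssocCol

/-- Nat mirror of the (A, B) recursion: index j ↦ (A_{j+2}, d_{j+2}) with d = -B. -/
def natAB (n : ℕ) : ℕ → ℕ × ℕ
  | 0 => (if n % 2 = 0 ∨ 2 ≤ (n + 1) / 2 then (n + 4) / 2 else 1, 0)
  | j + 1 =>
      (if n % 2 = 0 ∨ j + 3 ≤ (n + 1) / 2 then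
        ((n + 3 - ((j + 2) * (natAB n j).1 - (n + 3 - (natAB n j).2))) + (j + 2)) / (j + 3)
       else 1,
       (j + 2) * (natAB n j).1 - (n + 3 - (natAB n j).2))

lemma ceil3 (x j : ℕ) : x ≤ (j + 3) * ((x + j + 2) / (j + 3)) ∧
    (j + 3) * ((x + j + 2) / (j + 3)) ≤ x + j + 2 := by
  have h := Nat.div_add_mod (x + j + 2) (j + 3)
  have h2 := Nat.mod_lt (x + j + 2) (show 0 < j + 3 by omega)
  omega

lemma natAB_inv (n : ℕ) : ∀ j : ℕ, j + 2 ≤ (n + 1) / 2 + 1 →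
    (natAB n j).2 ≤ j ∧ 1 ≤ (natAB n j).1 ∧
    ((n % 2 = 0 ∨ j + 2 ≤ (n + 1) / 2) →
      (j + 2) * (natAB n j).1 = (n + 3 - (natAB n j).2) + (natAB n (j + 1)).2 ∧
      (natAB n (j + 1)).2 ≤ j + 1) := by
  intro j
  induction j with
  | zero =>
    intro _
    refine ⟨le_refl _, ?_, ?_⟩
    · simp only [natAB]
      split <;> omega
    · intro _
      simp only [natAB]
      have h := Nat.div_add_mod (n + 4) 2
      have h2 := Nat.mod_lt (n + 4) (show 0 < 2 by norm_num)
      split <;> omega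
  | succ j ih =>
    intro hj
    obtain ⟨ih1, ih2, ih3⟩ := ih (by omega)
    have hnov : n % 2 = 0 ∨ j + 2 ≤ (n + 1) / 2 := by omega
    obtain ⟨hid, hdb⟩ := ih3 hnov
    -- basic abbreviations
    have hxpos : (natAB n (j + 1)).2 ≤ n + 2 := by omega
    have hA : (natAB n (j + 1)).1 =
        if n % 2 = 0 ∨ j + 3 ≤ (n + 1) / 2 then
          ((n + 3 - (natAB n (j + 1)).2) + j + 2) / (j + 3) else 1 := by
      conv_lhs => rw [show (natAB n (j+1)).1 =
        (if n % 2 = 0 ∨ j + 3 ≤ (n + 1) / 2 then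
          ((n + 3 - ((j + 2) * (natAB n j).1 - (n + 3 - (natAB n j).2))) + (j + 2)) / (j + 3)
         else 1) from rfl]
      have e2 : (natAB n (j+1)).2 = (j + 2) * (natAB n j).1 - (n + 3 - (natAB n j).2) := rfl
      rw [← e2]
      ring_nf
    refine ⟨hdb, ?_, ?_⟩
    · rw [hA]
      split
      · rw [Nat.one_le_div_iff (by omega)]
        omega
      · omega
    · intro hnov2
      set x := n + 3 - (natAB n (j + 1)).2 with hx
      have hA' : (natAB n (j + 1)).1 = (x + j + 2) / (j + 3) := by
        rw [hA, if_pos hnov2]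
      have hdd2 : (natAB n (j + 2)).2
          = (j + 3) * (natAB n (j + 1)).1 - (n + 3 - (natAB n (j + 1)).2) := rfl
      have hc := ceil3 x j
      rw [← hA'] at hc
      rw [show j + 1 + 2 = j + 3 from rfl]
      rw [hdd2, ← hx]
      omega

lemma ceil_q (x k : ℕ) (hk : 0 < k) :
    ⌈(x : ℚ) / (k : ℚ)⌉ = (((x + k - 1) / k : ℕ) : ℤ) := by
  have h := Nat.div_add_mod (x + k - 1) k
  have h2 := Nat.mod_lt (x + k - 1) hk
  have hq1 : x ≤ k * ((x + k - 1) / k) := by omega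
  have hq2 : k * ((x + k - 1) / k) ≤ x + k - 1 := by omega
  set Q := (x + k - 1) / k with hQ
  have hkq : (0 : ℚ) < (k : ℚ) := by exact_mod_cast hk
  have hq1' : x ≤ k * Q := by omega
  have c3 : ((k * Q : ℕ) : ℚ) ≤ (x : ℚ) + (k : ℚ) - 1 := by
    have h5 : k * Q ≤ x + k - 1 := by omega
    have h6 : ((k * Q : ℕ) : ℚ) ≤ ((x + k - 1 : ℕ) : ℚ) := by exact_mod_cast h5
    have h4 : ((x + k - 1 : ℕ) : ℚ) = (x : ℚ) + (k : ℚ) - 1 := by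
      rw [Nat.cast_sub (show 1 ≤ x + k by omega)]
      push_cast; ring
    linarith
  push_cast at c3
  have g2 : (x : ℚ) / k ≤ (Q : ℚ) := by
    rw [div_le_iff₀ hkq]
    have h7 := (Nat.cast_le (α := ℚ)).mpr hq1'
    push_cast at h7
    nlinarith [h7]
  have g1 : (Q : ℚ) - 1 < (x : ℚ) / k := by
    rw [lt_div_iff₀ hkq]
    nlinarith [c3, hkq]
  rw [Int.ceil_eq_iff]
  constructor
  · exact_mod_cast g1
  · exact_mod_cast g2

lemma assocAB_eq (n : ℕ) : ∀ j : ℕ, j + 2 ≤ (n + 1) / 2 + 1 →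
    assocAB n j = (((natAB n j).1 : ℤ), -((natAB n j).2 : ℤ)) := by
  intro j
  induction j with
  | zero =>
    intro _
    have h2 : (natAB n 0).2 = 0 := rfl
    rw [h2]
    simp only [natAB, assocAB]
    split
    · refine Prod.ext ?_ (by simp)
      show ⌈((n : ℚ) + 3) / 2⌉ = _
      have hc : ((n : ℚ) + 3) = ((n + 3 : ℕ) : ℚ) := by push_cast; ring
      rw [hc, show (2 : ℚ) = ((2 : ℕ) : ℚ) from by norm_num, ceil_q (n+3) 2 (by norm_num)]
      rw [show n + 3 + 2 - 1 = n + 4 from by omega]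
    · exact Prod.ext (by norm_num) (by simp)
  | succ j ih =>
    intro hj
    have ihe := ih (by omega)
    obtain ⟨hd, hA1, hident⟩ := natAB_inv n j (by omega)
    obtain ⟨hid, hdb⟩ := hident (by omega)
    have hdn : (natAB n j).2 ≤ n + 2 := by omega
    have hdn1 : (natAB n (j+1)).2 ≤ n + 2 := by omega
    have hcast : ((j : ℤ) + 2) * ((natAB n j).1 : ℤ)
        = ((n : ℤ) + 3 - ((natAB n j).2 : ℤ)) + ((natAB n (j+1)).2 : ℤ) := by
      have h5 := hid
      zify [show (natAB n j).2 ≤ n + 3 by omega] at h5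
      push_cast at h5 ⊢
      linarith
    have hun : assocAB n (j+1) =
        (if n % 2 = 0 ∨ j + 3 ≤ (n + 1) / 2 then
          ⌈((n : ℚ) + 3 + ((((n : ℤ) + 3 + (assocAB n j).2 - ((j : ℤ) + 2) * (assocAB n j).1) : ℤ) : ℚ)) / ((j : ℚ) + 3)⌉
         else 1,
         (n : ℤ) + 3 + (assocAB n j).2 - ((j : ℤ) + 2) * (assocAB n j).1) := rfl
    have hBval : (n : ℤ) + 3 + (assocAB n j).2 - ((j : ℤ) + 2) * (assocAB n j).1
        = -((natAB n (j+1)).2 : ℤ) := by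
      rw [ihe]
      simp only [Prod.fst, Prod.snd]
      linarith [hcast]
    rw [hun, hBval]
    have hfst2 : (natAB n (j+1)).1 = (if n % 2 = 0 ∨ j + 3 ≤ (n + 1) / 2 then
        ((n + 3 - (natAB n (j+1)).2) + (j + 2)) / (j + 3) else 1) := by
      conv_lhs => rw [show (natAB n (j+1)).1 =
        (if n % 2 = 0 ∨ j + 3 ≤ (n + 1) / 2 then
          ((n + 3 - ((j + 2) * (natAB n j).1 - (n + 3 - (natAB n j).2))) + (j + 2)) / (j + 3)
         else 1) from rfl]
      have e2 : (natAB n (j+1)).2 = (j + 2) * (natAB n j).1 - (n + 3 - (natAB n j).2) := rfl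
      rw [← e2]
    refine Prod.ext ?_ (by simp)
    show (if n % 2 = 0 ∨ j + 3 ≤ (n + 1) / 2 then _ else 1 : ℤ) = _
    rw [hfst2]
    split
    · show ⌈((n : ℚ) + 3 + ((-((natAB n (j+1)).2 : ℤ) : ℤ) : ℚ)) / ((j : ℚ) + 3)⌉ = _
      have hc1 : ((n : ℚ) + 3 + ((-((natAB n (j+1)).2 : ℤ) : ℤ) : ℚ))
          = (((n + 3 - (natAB n (j+1)).2 : ℕ)) : ℚ) := by
        rw [Nat.cast_sub (show (natAB n (j+1)).2 ≤ n + 3 by omega)]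
        push_cast; ring
      rw [hc1, show ((j : ℚ) + 3) = ((j + 3 : ℕ) : ℚ) from by push_cast; ring,
        ceil_q _ _ (by omega)]
      rw [show (n + 3 - (natAB n (j+1)).2) + (j + 3) - 1 = (n + 3 - (natAB n (j+1)).2) + (j + 2) from by omega]
    · norm_num
/-- cumulative colour offset: CS n k = Σ_{j=2}^{k-1} A_j -/
def CS (n k : ℕ) : ℕ := ∑ j ∈ Finset.range (k - 2), (natAB n j).1

lemma CS_succ (n k : ℕ) (hk : 2 ≤ k) :
    CS n (k + 1) = CS n k + (natAB n (k - 2)).1 := by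
  unfold CS
  rw [show k + 1 - 2 = (k - 2) + 1 from by omega, Finset.sum_range_succ]

lemma CS_mono (n : ℕ) {x y : ℕ} (h : x ≤ y) : CS n x ≤ CS n y :=
  Finset.sum_le_sum_of_subset (Finset.range_subset_range.2 (by omega))

lemma D_le (n k : ℕ) (hk : 2 ≤ k) (hK : k ≤ (n + 1) / 2 + 1) :
    (natAB n (k - 2)).2 ≤ k - 2 :=
  (natAB_inv n (k - 2) (by omega)).1

lemma AA_pos (n k : ℕ) (hk : 2 ≤ k) (hK : k ≤ (n + 1) / 2 + 1) :
    1 ≤ (natAB n (k - 2)).1 :=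
  (natAB_inv n (k - 2) (by omega)).2.1

lemma CS_lt (n : ℕ) {x : ℕ} (h2 : 2 ≤ x) (hK : x ≤ (n + 1) / 2 + 1) :
    CS n x < CS n (x + 1) := by
  rw [CS_succ n x h2]
  have := AA_pos n x h2 hK
  omega

lemma ident (n k : ℕ) (hk : 2 ≤ k) (hK : k ≤ (n + 1) / 2 + 1)
    (hno : n % 2 = 0 ∨ k ≤ (n + 1) / 2) :
    k * (natAB n (k - 2)).1 = (n + 3 - (natAB n (k - 2)).2) + (natAB n (k - 1)).2 ∧
    (natAB n (k - 1)).2 ≤ k - 1 := by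
  have h := (natAB_inv n (k - 2) (by omega)).2.2 (by omega)
  rw [show k - 2 + 2 = k from by omega, show k - 2 + 1 = k - 1 from by omega] at h
  exact h

lemma AA_K_odd (n : ℕ) (ho : n % 2 = 1) :
    (natAB n ((n + 1) / 2 + 1 - 2)).1 = 1 := by
  have hn1 : 1 ≤ n := by omega
  rcases Nat.eq_or_lt_of_le hn1 with h1 | h2
  · rw [show (n + 1) / 2 + 1 - 2 = 0 from by omega]
    simp only [natAB]
    rw [if_neg (by omega)]
  · have h3 : 3 ≤ n := by omega
    rw [show (n + 1) / 2 + 1 - 2 = ((n + 1) / 2 - 2) + 1 from by omega]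
    simp only [natAB]
    rw [if_neg (by omega)]

/-- colour of a chord given span k and start v -/
def colKV (n k v : ℕ) : ℕ :=
  if v < (natAB n (k - 2)).2 then CS n k
  else CS n k + (v - (natAB n (k - 2)).2) / k + 1

lemma t_bound (n k v : ℕ) (hk : 2 ≤ k) (hK : k ≤ (n + 1) / 2 + 1) (hv : v ≤ n + 2)
    (hov : n % 2 = 1 → k = (n + 1) / 2 + 1 → v ≤ (n + 1) / 2)
    (hD : (natAB n (k - 2)).2 ≤ v) :
    (v - (natAB n (k - 2)).2) / k + 1 ≤ (natAB n (k - 2)).1 := by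
  by_cases hno : n % 2 = 0 ∨ k ≤ (n + 1) / 2
  · obtain ⟨hi, _⟩ := ident n k hk hK hno
    have hcomm : k * (natAB n (k - 2)).1 = (natAB n (k - 2)).1 * k := Nat.mul_comm _ _
    have hDk := D_le n k hk hK
    have h8 : v - (natAB n (k - 2)).2 < (natAB n (k - 2)).1 * k := by omega
    have := (Nat.div_lt_iff_lt_mul (show 0 < k by omega)).2 h8
    omega
  · have hkK : k = (n + 1) / 2 + 1 := by omega
    have hodd : n % 2 = 1 := by omega
    have hv2 := hov hodd hkK
    have hA1 : (natAB n (k - 2)).1 = 1 := by rw [hkK]; exact AA_K_odd n hodd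
    have : (v - (natAB n (k - 2)).2) / k = 0 := Nat.div_eq_of_lt (by omega)
    omega

lemma colKV_bounds (n k v : ℕ) (hn : 1 ≤ n) (hk : 2 ≤ k) (hK : k ≤ (n + 1) / 2 + 1)
    (hv : v ≤ n + 2) (hov : n % 2 = 1 → k = (n + 1) / 2 + 1 → v ≤ (n + 1) / 2) :
    1 ≤ colKV n k v ∧ colKV n k v ≤ CS n ((n + 1) / 2 + 2) := by
  unfold colKV
  split_ifs with hst
  · -- straddle: v < D k, so k ≥ 3 and CS k ≥ CS 3 ≥ 1
    have hD := D_le n k hk hK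
    have hk3 : 3 ≤ k := by omega
    have hCS3 : CS n 3 = (natAB n 0).1 := by
      unfold CS; rw [show 3 - 2 = 1 from rfl, Finset.sum_range_one]
    have hA2 := AA_pos n 2 (le_refl _) (by omega)
    have h1 : 1 ≤ CS n 3 := by
      rw [hCS3]; simpa using hA2
    constructor
    · exact le_trans h1 (CS_mono n hk3)
    · exact CS_mono n (by omega)
  · constructor
    · exact Nat.le_add_left 1 _
    · have hb := t_bound n k v hk hK hv hov (by omega)
      have hcs := CS_succ n k hk
      have hmono : CS n (k + 1) ≤ CS n ((n + 1) / 2 + 2) := CS_mono n (by omega)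
      omega

/-- same colour ⇒ same block: the three possible configurations -/
lemma block_eq (n k₁ v₁ k₂ v₂ : ℕ)
    (hk₁ : 2 ≤ k₁) (hK₁ : k₁ ≤ (n + 1) / 2 + 1) (hv₁ : v₁ ≤ n + 2)
    (hov₁ : n % 2 = 1 → k₁ = (n + 1) / 2 + 1 → v₁ ≤ (n + 1) / 2)
    (hk₂ : 2 ≤ k₂) (hK₂ : k₂ ≤ (n + 1) / 2 + 1) (hv₂ : v₂ ≤ n + 2)
    (hov₂ : n % 2 = 1 → k₂ = (n + 1) / 2 + 1 → v₂ ≤ (n + 1) / 2)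
    (hc : colKV n k₁ v₁ = colKV n k₂ v₂) :
    (k₁ = k₂ ∧ v₂ + 1 ≤ v₁ + k₁ ∧ v₁ + 1 ≤ v₂ + k₁)
    ∨ (k₂ = k₁ + 1 ∧ v₂ + n + 4 ≤ v₁ + k₁)
    ∨ (k₁ = k₂ + 1 ∧ v₁ + n + 4 ≤ v₂ + k₂) := by
  have hD₁ := D_le n k₁ hk₁ hK₁
  have hD₂ := D_le n k₂ hk₂ hK₂
  unfold colKV at hc
  split_ifs at hc with hst₁ hst₂ hst₂
  · -- straddle/straddle : CS k₁ = CS k₂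
    left
    have hkk : k₁ = k₂ := by
      rcases Nat.lt_trichotomy k₁ k₂ with h | h | h
      · exfalso
        have h5 := CS_lt n hk₁ (by omega)
        have h6 := CS_mono n (show k₁ + 1 ≤ k₂ from by omega)
        omega
      · exact h
      · exfalso
        have h5 := CS_lt n hk₂ (by omega)
        have h6 := CS_mono n (show k₂ + 1 ≤ k₁ from by omega)
        omega
    subst hkk
    omega
  · -- straddle₁ / in₂ : CS k₁ = CS k₂ + t₂ + 1  (so k₁ = k₂ + 1, case 3)
    right; right
    obtain ⟨t₂, ht₂⟩ : ∃ t, (v₂ - (natAB n (k₂ - 2)).2) / k₂ = t := ⟨_, rfl⟩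
    obtain ⟨m₂, hm₂⟩ : ∃ m, (v₂ - (natAB n (k₂ - 2)).2) % k₂ = m := ⟨_, rfl⟩
    have hb₂ := t_bound n k₂ v₂ hk₂ hK₂ hv₂ hov₂ (by omega)
    have e₂ := Nat.div_add_mod (v₂ - (natAB n (k₂ - 2)).2) k₂
    rw [ht₂] at hc hb₂ e₂
    rw [hm₂] at e₂
    have hcs₂ := CS_succ n k₂ hk₂
    have hkk : k₁ = k₂ + 1 := by
      rcases Nat.lt_trichotomy k₁ (k₂ + 1) with h | h | h
      · exfalso
        have h6 := CS_mono n (show k₁ ≤ k₂ from by omega)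
        omega
      · exact h
      · exfalso
        have h5 : CS n (k₂ + 1) < CS n (k₂ + 2) := CS_lt n (by omega) (by omega)
        have h6 := CS_mono n (show k₂ + 2 ≤ k₁ from by omega)
        omega
    subst hkk
    refine ⟨rfl, ?_⟩
    obtain ⟨hi, hDb⟩ := ident n k₂ hk₂ (by omega) (by omega)
    rw [show k₂ + 1 - 2 = k₂ - 1 from by omega] at hst₁
    have hA : (natAB n (k₂ - 2)).1 = t₂ + 1 := by omega
    rw [hA, Nat.mul_add, Nat.mul_one] at hi
    omega
  · -- in₁ / straddle₂ : CS k₁ + t₁ + 1 = CS k₂  (so k₂ = k₁ + 1, case 2)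
    right; left
    obtain ⟨t₁, ht₁⟩ : ∃ t, (v₁ - (natAB n (k₁ - 2)).2) / k₁ = t := ⟨_, rfl⟩
    obtain ⟨m₁, hm₁⟩ : ∃ m, (v₁ - (natAB n (k₁ - 2)).2) % k₁ = m := ⟨_, rfl⟩
    have hb₁ := t_bound n k₁ v₁ hk₁ hK₁ hv₁ hov₁ (by omega)
    have e₁ := Nat.div_add_mod (v₁ - (natAB n (k₁ - 2)).2) k₁
    rw [ht₁] at hc hb₁ e₁
    rw [hm₁] at e₁
    have hcs₁ := CS_succ n k₁ hk₁
    have hkk : k₂ = k₁ + 1 := by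
      rcases Nat.lt_trichotomy k₂ (k₁ + 1) with h | h | h
      · exfalso
        have h6 := CS_mono n (show k₂ ≤ k₁ from by omega)
        omega
      · exact h
      · exfalso
        have h5 : CS n (k₁ + 1) < CS n (k₁ + 2) := CS_lt n (by omega) (by omega)
        have h6 := CS_mono n (show k₁ + 2 ≤ k₂ from by omega)
        omega
    subst hkk
    refine ⟨rfl, ?_⟩
    obtain ⟨hi, hDb⟩ := ident n k₁ hk₁ (by omega) (by omega)
    rw [show k₁ + 1 - 2 = k₁ - 1 from by omega] at hst₂
    have hA : (natAB n (k₁ - 2)).1 = t₁ + 1 := by omega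
    rw [hA, Nat.mul_add, Nat.mul_one] at hi
    omega
  · -- in / in
    left
    obtain ⟨t₁, ht₁⟩ : ∃ t, (v₁ - (natAB n (k₁ - 2)).2) / k₁ = t := ⟨_, rfl⟩
    obtain ⟨m₁, hm₁⟩ : ∃ m, (v₁ - (natAB n (k₁ - 2)).2) % k₁ = m := ⟨_, rfl⟩
    obtain ⟨t₂, ht₂⟩ : ∃ t, (v₂ - (natAB n (k₂ - 2)).2) / k₂ = t := ⟨_, rfl⟩
    obtain ⟨m₂, hm₂⟩ : ∃ m, (v₂ - (natAB n (k₂ - 2)).2) % k₂ = m := ⟨_, rfl⟩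
    have hb₁ := t_bound n k₁ v₁ hk₁ hK₁ hv₁ hov₁ (by omega)
    have hb₂ := t_bound n k₂ v₂ hk₂ hK₂ hv₂ hov₂ (by omega)
    have e₁ := Nat.div_add_mod (v₁ - (natAB n (k₁ - 2)).2) k₁
    have e₂ := Nat.div_add_mod (v₂ - (natAB n (k₂ - 2)).2) k₂
    have hlt₁ := Nat.mod_lt (v₁ - (natAB n (k₁ - 2)).2) (show 0 < k₁ from by omega)
    have hlt₂ := Nat.mod_lt (v₂ - (natAB n (k₂ - 2)).2) (show 0 < k₂ from by omega)
    rw [ht₁] at hc hb₁ e₁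
    rw [ht₂] at hc hb₂ e₂
    rw [hm₁] at e₁ hlt₁
    rw [hm₂] at e₂ hlt₂
    have hcs₁ := CS_succ n k₁ hk₁
    have hcs₂ := CS_succ n k₂ hk₂
    have hkk : k₁ = k₂ := by
      rcases Nat.lt_trichotomy k₁ k₂ with h | h | h
      · exfalso
        have h6 := CS_mono n (show k₁ + 1 ≤ k₂ from by omega)
        omega
      · exact h
      · exfalso
        have h6 := CS_mono n (show k₂ + 1 ≤ k₁ from by omega)
        omega
    subst hkk
    have ht : t₁ = t₂ := by omega
    subst ht
    refine ⟨rfl, ?_, ?_⟩ <;> omega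

def col (n a b : ℕ) : ℕ :=
  colKV n (if 2 * (b - a) + 1 ≤ n then b - a + 2 else n + 1 - (b - a))
    (if 2 * (b - a) + 1 ≤ n then a else b + 2)

def fcol (n : ℕ) (S : Finset ℕ) : ℕ :=
  if h : S.Nonempty then col n (S.min' h) (S.max' h) else 1

lemma col_short (n a b : ℕ) (hs : 2 * (b - a) + 1 ≤ n) :
    col n a b = colKV n (b - a + 2) a := by
  unfold col
  rw [if_pos hs, if_pos hs]

lemma col_long (n a b : ℕ) (hs : ¬ 2 * (b - a) + 1 ≤ n) :
    col n a b = colKV n (n + 1 - (b - a)) (b + 2) := by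
  unfold col
  rw [if_neg hs, if_neg hs]

lemma col_eq_sep (n a b c d : ℕ) (hn : 1 ≤ n) (h1 : a ≤ b) (h2 : b ≤ n) (h3 : c ≤ d)
    (h4 : d ≤ n) (hne1 : ¬(a = 0 ∧ b = n)) (hne2 : ¬(c = 0 ∧ d = n))
    (hne : ¬(a = c ∧ b = d)) (hcol : col n a b = col n c d) :
    (a + 1 ≤ c ∧ c ≤ b + 1 ∧ b < d) ∨ (c + 1 ≤ a ∧ a ≤ d + 1 ∧ d < b) := by
  by_cases hs₁ : 2 * (b - a) + 1 ≤ n <;> by_cases hs₂ : 2 * (d - c) + 1 ≤ n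
  · rw [col_short n a b hs₁, col_short n c d hs₂] at hcol
    have hb := block_eq n (b - a + 2) a (d - c + 2) c
      (by omega) (by omega) (by omega) (by omega)
      (by omega) (by omega) (by omega) (by omega) hcol
    omega
  · rw [col_short n a b hs₁, col_long n c d hs₂] at hcol
    have hb := block_eq n (b - a + 2) a (n + 1 - (d - c)) (d + 2)
      (by omega) (by omega) (by omega) (by omega)
      (by omega) (by omega) (by omega) (by omega) hcol
    omega
  · rw [col_long n a b hs₁, col_short n c d hs₂] at hcol
    have hb := block_eq n (n + 1 - (b - a)) (b + 2) (d - c + 2) c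
      (by omega) (by omega) (by omega) (by omega)
      (by omega) (by omega) (by omega) (by omega) hcol
    omega
  · rw [col_long n a b hs₁, col_long n c d hs₂] at hcol
    have hb := block_eq n (n + 1 - (b - a)) (b + 2) (n + 1 - (d - c)) (d + 2)
      (by omega) (by omega) (by omega) (by omega)
      (by omega) (by omega) (by omega) (by omega) hcol
    omega

lemma col_bounds (n a b : ℕ) (hn : 1 ≤ n) (h1 : a ≤ b) (h2 : b ≤ n)
    (hne1 : ¬(a = 0 ∧ b = n)) :
    1 ≤ col n a b ∧ col n a b ≤ CS n ((n + 1) / 2 + 2) := by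
  by_cases hs : 2 * (b - a) + 1 ≤ n
  · rw [col_short n a b hs]
    exact colKV_bounds n _ _ hn (by omega) (by omega) (by omega) (by omega)
  · rw [col_long n a b hs]
    exact colKV_bounds n _ _ hn (by omega) (by omega) (by omega) (by omega)

lemma min'_Icc (a b : ℕ) (hab : a ≤ b) (h : (Finset.Icc a b).Nonempty) :
    (Finset.Icc a b).min' h = a :=
  le_antisymm (Finset.min'_le _ _ (Finset.mem_Icc.2 ⟨le_refl _, hab⟩))
    (Finset.le_min' _ _ _ (fun y hy => (Finset.mem_Icc.1 hy).1))

lemma max'_Icc (a b : ℕ) (hab : a ≤ b) (h : (Finset.Icc a b).Nonempty) :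
    (Finset.Icc a b).max' h = b :=
  le_antisymm (Finset.max'_le _ _ _ (fun y hy => (Finset.mem_Icc.1 hy).2))
    (Finset.le_max' _ _ (Finset.mem_Icc.2 ⟨hab, le_refl _⟩))

lemma segment_data (n : ℕ) {S : Finset ℕ} (h : IsSegment n S) :
    ∃ a b, a ≤ b ∧ b ≤ n ∧ ¬(a = 0 ∧ b = n) ∧ S = Finset.Icc a b ∧
      fcol n S = col n a b := by
  obtain ⟨a, b, hab, hbn, hS, hss⟩ := h
  refine ⟨a, b, hab, hbn, ?_, hS, ?_⟩
  · rintro ⟨ha, hb⟩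
    have he : Finset.Icc a b = Finset.range (n + 1) := by
      subst ha; subst hb; ext x; simp [Nat.lt_succ_iff]
    rw [hS, he] at hss
    exact (lt_irrefl _ hss)
  · subst hS
    have hne : (Finset.Icc a b).Nonempty := Finset.nonempty_Icc.2 hab
    unfold fcol
    rw [dif_pos hne, min'_Icc a b hab hne, max'_Icc a b hab hne]

end AssocCol

lemma sum_Icc_two (f : ℕ → ℤ) (K : ℕ) :
    ∑ i ∈ Finset.Icc 2 (K + 1), f i = ∑ j ∈ Finset.range K, f (j + 2) := by
  induction K with
  | zero =>
    rw [Finset.Icc_eq_empty (by omega), Finset.range_zero, Finset.sum_empty, Finset.sum_empty]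
  | succ k ih =>
    rw [Finset.sum_range_succ, ← ih, Finset.sum_Icc_succ_top (by omega : 2 ≤ k + 1 + 1)]

/-- Lemma 0: there is a proper colouring of the `n`-dimensional associahedron with
`Σ_{i=2}^{⌈n/2⌉+1} A_i` colours; consequently `α_n ≤ Σ_{i=2}^{⌈n/2⌉+1} A_i`. -/
theorem assoc_colouring_with_sum_A (n : ℕ) (hn : 1 ≤ n) :
    (∃ m : ℕ, (m : ℤ) = ∑ i ∈ Finset.Icc 2 ((n + 1) / 2 + 1), assocA n i ∧
       ∃ f : Finset ℕ → ℕ, IsProperColouringAssoc n m f) ∧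
    (assocChromatic n : ℤ) ≤ ∑ i ∈ Finset.Icc 2 ((n + 1) / 2 + 1), assocA n i := by
  have hsum : ((AssocCol.CS n ((n + 1) / 2 + 2) : ℕ) : ℤ)
      = ∑ i ∈ Finset.Icc 2 ((n + 1) / 2 + 1), assocA n i := by
    rw [sum_Icc_two (assocA n) ((n + 1) / 2)]
    unfold AssocCol.CS
    rw [show (n + 1) / 2 + 2 - 2 = (n + 1) / 2 from by omega]
    rw [Nat.cast_sum]
    apply Finset.sum_congr rfl
    intro j hj
    rw [Finset.mem_range] at hj
    show ((AssocCol.natAB n j).1 : ℤ) = assocA n (j + 2)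
    unfold assocA
    rw [show j + 2 - 2 = j from by omega, AssocCol.assocAB_eq n j (by omega)]
  have hproper : IsProperColouringAssoc n (AssocCol.CS n ((n + 1) / 2 + 2)) (AssocCol.fcol n) := by
    constructor
    · intro S hS
      obtain ⟨a, b, h1, h2, hne1, hSa, hf⟩ := AssocCol.segment_data n hS
      rw [hf, Finset.mem_Icc]
      exact AssocCol.col_bounds n a b hn h1 h2 hne1
    · intro S T hS hT hST hfe
      obtain ⟨a, b, h1, h2, hne1, hSa, hfS⟩ := AssocCol.segment_data n hS
      obtain ⟨c, d, h3, h4, hne2, hTa, hfT⟩ := AssocCol.segment_data n hT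
      have hne : ¬(a = c ∧ b = d) := by
        rintro ⟨rfl, rfl⟩
        exact hST (hSa.trans hTa.symm)
      have hcol : AssocCol.col n a b = AssocCol.col n c d := by
        rw [← hfS, ← hfT]; exact hfe
      rcases AssocCol.col_eq_sep n a b c d hn h1 h2 h3 h4 hne1 hne2 hne hcol with
        ⟨p1, p2, p3⟩ | ⟨p1, p2, p3⟩
      · exact Or.inl ⟨a, b, c, d, h1, h2, h3, h4, hSa, hTa, p1, p2, p3⟩
      · exact Or.inr ⟨c, d, a, b, h3, h4, h1, h2, hTa, hSa, p1, p2, p3⟩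
  constructor
  · exact ⟨AssocCol.CS n ((n + 1) / 2 + 2), hsum, AssocCol.fcol n, hproper⟩
  · have hmem : AssocCol.CS n ((n + 1) / 2 + 2) ∈
        {m : ℕ | ∃ f : Finset ℕ → ℕ, IsProperColouringAssoc n m f} :=
      ⟨AssocCol.fcol n, hproper⟩
    have hle := Nat.sInf_le hmem
    rw [← hsum]
    exact_mod_cast hle
end

section
/- For every n ≥ 1, the chromatic number α_n of the n-dimensional associahedron satisfies α_n ≥ n·(1/1 + 1/2 + ⋯ + 1/⌈n/2⌉) + 4·(1/1 + 1/2 + ⋯ + 1/⌈n/2⌉) − (3n+8)/2. -/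
namespace AssocAux

lemma Icc_nat_inj {a b c d : ℕ} (hab : a ≤ b) (hcd : c ≤ d)
    (h : Finset.Icc a b = Finset.Icc c d) : a = c ∧ b = d := by
  have h1 : a ∈ Finset.Icc c d := by rw [← h]; simp [hab]
  have h2 : b ∈ Finset.Icc c d := by rw [← h]; simp [hab]
  have h3 : c ∈ Finset.Icc a b := by rw [h]; simp [hcd]
  have h4 : d ∈ Finset.Icc a b := by rw [h]; simp [hcd]
  simp only [Finset.mem_Icc] at h1 h2 h3 h4
  omega

lemma precedes_extract {n a b c d : ℕ} (hab : a ≤ b) (hcd : c ≤ d)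
    (h : SegPrecedes n (Finset.Icc a b) (Finset.Icc c d)) :
    a + 1 ≤ c ∧ c ≤ b + 1 ∧ b < d := by
  obtain ⟨a', b', c', d', h1, _, h3, _, h5, h6, h7, h8, h9⟩ := h
  obtain ⟨rfl, rfl⟩ := Icc_nat_inj hab h1 h5
  obtain ⟨rfl, rfl⟩ := Icc_nat_inj hcd h3 h6
  exact ⟨h7, h8, h9⟩

/-- the pairwise relation within a colour class -/
lemma rel_of_same_colour {n m : ℕ} {f : Finset ℕ → ℕ} (hf : IsProperColouringAssoc n m f)
    {a b c d : ℕ} (hab : a ≤ b) (hbn : b ≤ n) (hcd : c ≤ d) (hdn : d ≤ n)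
    (hS : IsSegment n (Finset.Icc a b)) (hT : IsSegment n (Finset.Icc c d))
    (hne : ¬(a = c ∧ b = d)) (hcol : f (Finset.Icc a b) = f (Finset.Icc c d)) :
    (a + 1 ≤ c ∧ c ≤ b + 1 ∧ b < d) ∨ (c + 1 ≤ a ∧ a ≤ d + 1 ∧ d < b) := by
  have hne' : Finset.Icc a b ≠ Finset.Icc c d := fun h => hne (Icc_nat_inj hab hcd h)
  rcases hf.2 _ _ hS hT hne' hcol with h | h
  · exact Or.inl (precedes_extract hab hcd h)
  · exact Or.inr (precedes_extract hcd hab h)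

abbrev NP := Σ _ : ℕ, ℕ

lemma np_ne_iff {p q : NP} : p ≠ q ↔ ¬(p.1 = q.1 ∧ p.2 = q.2) := by
  obtain ⟨a, b⟩ := p; obtain ⟨c, d⟩ := q
  constructor
  · rintro h ⟨h1, h2⟩
    simp only at h1 h2
    subst h1; subst h2; exact h rfl
  · rintro h heq
    cases heq
    exact h ⟨rfl, rfl⟩

lemma card_bound {C : Finset NP}
    (hle : ∀ p ∈ C, p.1 ≤ p.2)
    (hrel : ∀ p ∈ C, ∀ q ∈ C, p ≠ q →
      (p.1 + 1 ≤ q.1 ∧ q.1 ≤ p.2 + 1 ∧ p.2 < q.2) ∨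
      (q.1 + 1 ≤ p.1 ∧ p.1 ≤ q.2 + 1 ∧ q.2 < p.2))
    {p : NP} (hp : p ∈ C) : C.card ≤ p.2 - p.1 + 2 := by
  obtain ⟨p₀, hp₀, hmin⟩ := C.exists_min_image (fun q => q.1) ⟨p, hp⟩
  have h0 : ∀ q ∈ C, p₀.2 ≤ q.2 ∧ q.1 ≤ p₀.2 + 1 := by
    intro q hq
    by_cases hqe : q = p₀
    · subst hqe; exact ⟨le_rfl, by have := hle q hq; omega⟩
    · rcases hrel p₀ hp₀ q hq (fun h => hqe h.symm) with h | h
      · omega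
      · exfalso; have := hmin q hq; omega
  classical
  set A := C.filter (fun q => q.1 < p.1) with hAdef
  set B := C.filter (fun q => p.1 < q.1) with hBdef
  have hA : A.card ≤ p.2 - p₀.2 := by
    have := Finset.card_le_card_of_injOn (fun q => q.2)
      (s := A) (t := Finset.Ico p₀.2 p.2) ?_ ?_
    · simpa [Nat.card_Ico] using this
    · intro q hq
      rw [hAdef, Finset.mem_coe, Finset.mem_filter] at hq
      obtain ⟨hqC, hqlt⟩ := hq
      have hne : q ≠ p := fun h => by subst h; omega
      have hh := (h0 q hqC).1
      rcases hrel q hqC p hp hne with h | h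
      · have : q.2 ∈ Finset.Ico p₀.2 p.2 := Finset.mem_Ico.2 ⟨hh, h.2.2⟩
        exact this
      · exfalso; omega
    · intro q hq q' hq' heq
      simp only [hAdef, Finset.coe_filter, Set.mem_setOf_eq] at hq hq'
      have heq2 : q.2 = q'.2 := heq
      by_contra hne
      rcases hrel q hq.1 q' hq'.1 hne with h | h <;> omega
  have hB : B.card ≤ p₀.2 + 2 - (p.1 + 1) := by
    have := Finset.card_le_card_of_injOn (fun q => q.1)
      (s := B) (t := Finset.Ico (p.1 + 1) (p₀.2 + 2)) ?_ ?_
    · simpa [Nat.card_Ico] using this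
    · intro q hq
      rw [hBdef, Finset.mem_coe, Finset.mem_filter] at hq
      have h2 := (h0 q hq.1).2
      have h3 := hq.2
      have : q.1 ∈ Finset.Ico (p.1 + 1) (p₀.2 + 2) := Finset.mem_Ico.2 ⟨by omega, by omega⟩
      exact this
    · intro q hq q' hq' heq
      simp only [hBdef, Finset.coe_filter, Set.mem_setOf_eq] at hq hq'
      have heq2 : q.1 = q'.1 := heq
      by_contra hne
      rcases hrel q hq.1 q' hq'.1 hne with h | h <;> omega
  have hsplit : C.card = A.card + B.card + 1 := by
    have hunion : C = (A ∪ B) ∪ {p} := by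
      ext q
      simp only [Finset.mem_union, Finset.mem_singleton, hAdef, hBdef, Finset.mem_filter]
      constructor
      · intro hq
        rcases Nat.lt_trichotomy q.1 p.1 with h | h | h
        · exact Or.inl (Or.inl ⟨hq, h⟩)
        · right
          by_contra hne
          rcases hrel q hq p hp hne with hr | hr <;> omega
        · exact Or.inl (Or.inr ⟨hq, h⟩)
      · rintro ((⟨hq, _⟩ | ⟨hq, _⟩) | rfl)
        · exact hq
        · exact hq
        · exact hp
    have hd1 : Disjoint A B := by
      rw [Finset.disjoint_left]
      intro q hq hq'
      rw [hAdef, Finset.mem_filter] at hq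
      rw [hBdef, Finset.mem_filter] at hq'
      omega
    have hd2 : Disjoint (A ∪ B) {p} := by
      rw [Finset.disjoint_right]
      intro q hq
      rw [Finset.mem_singleton] at hq
      subst hq
      rw [Finset.mem_union, hAdef, hBdef, Finset.mem_filter, Finset.mem_filter]
      omega
    rw [hunion, Finset.card_union_of_disjoint hd2, Finset.card_union_of_disjoint hd1,
      Finset.card_singleton]
  have h1 := (h0 p hp).1
  have h2 := (h0 p hp).2
  have h3 := hle p hp
  omega

noncomputable def wt (p : NP) : ℝ := ((p.2 : ℝ) - (p.1 : ℝ) + 2)⁻¹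

lemma sum_wt_le_one {C : Finset NP}
    (hle : ∀ p ∈ C, p.1 ≤ p.2)
    (hcard : ∀ p ∈ C, C.card ≤ p.2 - p.1 + 2) :
    ∑ p ∈ C, wt p ≤ 1 := by
  rcases C.eq_empty_or_nonempty with rfl | hC
  · simp
  have hpos : 0 < C.card := Finset.card_pos.2 hC
  have hbound : ∀ p ∈ C, wt p ≤ (C.card : ℝ)⁻¹ := by
    intro p hp
    have h1 := hcard p hp
    have h2 := hle p hp
    have h3 : (C.card : ℝ) ≤ (p.2 : ℝ) - (p.1 : ℝ) + 2 := by
      have := (Nat.cast_le (α := ℝ)).2 h1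
      push_cast [h2] at this
      linarith
    exact inv_anti₀ (by exact_mod_cast hpos) h3
  calc ∑ p ∈ C, wt p ≤ ∑ _p ∈ C, (C.card : ℝ)⁻¹ := Finset.sum_le_sum hbound
    _ = (C.card : ℝ) * (C.card : ℝ)⁻¹ := by rw [Finset.sum_const, nsmul_eq_mul]
    _ = 1 := mul_inv_cancel₀ (by positivity)

def pairs (n : ℕ) : Finset NP := (Finset.range (n + 1)).sigma (fun a => Finset.Icc a n)

def segPairs (n : ℕ) : Finset NP := (pairs n).erase ⟨0, n⟩

lemma mem_pairs {n : ℕ} {p : NP} : p ∈ pairs n ↔ p.1 ≤ p.2 ∧ p.2 ≤ n := by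
  obtain ⟨a, b⟩ := p
  simp [pairs, Finset.mem_sigma, Finset.mem_range, Finset.mem_Icc]
  omega

lemma mem_segPairs {n : ℕ} {p : NP} :
    p ∈ segPairs n ↔ p.1 ≤ p.2 ∧ p.2 ≤ n ∧ ¬(p.1 = 0 ∧ p.2 = n) := by
  obtain ⟨a, b⟩ := p
  rw [segPairs, Finset.mem_erase, mem_pairs]
  constructor
  · rintro ⟨hne, h1, h2⟩
    refine ⟨h1, h2, ?_⟩
    rintro ⟨h3, h4⟩
    simp only at h3 h4
    subst h3; subst h4
    exact hne rfl
  · rintro ⟨h1, h2, h3⟩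
    refine ⟨?_, h1, h2⟩
    intro heq
    cases heq
    exact h3 ⟨rfl, rfl⟩

lemma segment_of_mem {n : ℕ} {p : NP} (hp : p ∈ segPairs n) :
    IsSegment n (Finset.Icc p.1 p.2) := by
  rw [mem_segPairs] at hp
  obtain ⟨h1, h2, h3⟩ := hp
  refine ⟨p.1, p.2, h1, h2, rfl, ?_⟩
  rw [Finset.ssubset_iff_of_subset]
  · by_cases h0 : p.1 = 0
    · refine ⟨n, ?_, ?_⟩
      · simp
      · rw [Finset.mem_Icc]; omega
    · refine ⟨0, ?_, ?_⟩
      · simp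
      · rw [Finset.mem_Icc]; omega
  · intro x hx
    rw [Finset.mem_Icc] at hx
    rw [Finset.mem_range]
    omega

noncomputable def H (k : ℕ) : ℝ := ∑ i ∈ Finset.Icc 1 k, (1 : ℝ) / i

lemma H_succ (k : ℕ) : H (k + 1) = H k + 1 / ((k : ℝ) + 1) := by
  rw [H, H, Finset.sum_Icc_succ_top (by omega)]
  push_cast
  ring

lemma Icc_split (a b : ℕ) (h : a ≤ b + 1) :
    Finset.Icc a (b + 1) = insert (b + 1) (Finset.Icc a b) := by
  ext x; simp [Nat.lt_succ_iff, Finset.mem_Icc]; omega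

lemma colSum (n : ℕ) :
    ∑ a ∈ Finset.range (n + 2), ((n : ℝ) + 3 - (a : ℝ))⁻¹ = H (n + 3) - 1 := by
  have h1 : ∑ a ∈ Finset.range (n + 2), ((n : ℝ) + 3 - (a : ℝ))⁻¹
      = ∑ a ∈ Finset.range (n + 2), ((a : ℝ) + 2)⁻¹ := by
    rw [← Finset.sum_range_reflect]
    apply Finset.sum_congr rfl
    intro i hi
    rw [Finset.mem_range] at hi
    have : ((n + 2 - 1 - i : ℕ) : ℝ) = (n : ℝ) + 1 - i := by
      have : n + 2 - 1 - i = n + 1 - i := by omega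
      rw [this, Nat.cast_sub (by omega)]
      push_cast; ring
    rw [this]
    congr 1
    ring
  rw [h1]
  have h2 : H (n + 3) - 1 = ∑ i ∈ Finset.Ioc 1 (n + 3), (1 : ℝ) / i := by
    have hc : ∑ i ∈ Finset.Ioc (0 : ℕ) 1, (1 : ℝ) / i + ∑ i ∈ Finset.Ioc (1 : ℕ) (n + 3), (1 : ℝ) / i
        = ∑ i ∈ Finset.Ioc (0 : ℕ) (n + 3), (1 : ℝ) / i :=
      Finset.sum_Ioc_consecutive (fun i : ℕ => (1 : ℝ) / i) (by omega) (by omega)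
    have h0 : Finset.Ioc 0 1 = {1} := by decide
    have hH : H (n + 3) = ∑ i ∈ Finset.Ioc 0 (n + 3), (1 : ℝ) / i := by
      rw [H, ← Finset.Icc_add_one_left_eq_Ioc]; rfl
    rw [hH, ← hc, h0]
    simp
  rw [h2]
  have h3 : Finset.Ioc 1 (n + 3) = Finset.Icc 2 (n + 3) := by rw [← Finset.Icc_add_one_left_eq_Ioc]; rfl
  rw [h3]
  have h4 : Finset.Icc 2 (n + 3) = Finset.Ico 2 (n + 4) := by
    ext x; simp [Finset.mem_Icc, Finset.mem_Ico]; omega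
  rw [h4, Finset.sum_Ico_eq_sum_range]
  have : n + 4 - 2 = n + 2 := by omega
  rw [this]
  apply Finset.sum_congr rfl
  intro i _
  rw [one_div]
  congr 1
  push_cast; ring

lemma F_formula (n : ℕ) :
    ∑ p ∈ pairs n, wt p = ((n : ℝ) + 3) * H (n + 2) - 2 * ((n : ℝ) + 2) := by
  induction n with
  | zero =>
    have : pairs 0 = {⟨0, 0⟩} := by decide
    rw [this]
    have hH : H 2 = 3 / 2 := by
      rw [H]
      have : Finset.Icc 1 2 = {1, 2} := by decide
      rw [this]
      norm_num
    simp [wt, hH]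
    norm_num
  | succ n ih =>
    have hdecomp : ∑ p ∈ pairs (n + 1), wt p
        = ∑ a ∈ Finset.range (n + 2), ∑ b ∈ Finset.Icc a (n + 1), wt ⟨a, b⟩ := by
      rw [pairs, Finset.sum_sigma]
    have hstep : ∀ a ∈ Finset.range (n + 2),
        ∑ b ∈ Finset.Icc a (n + 1), wt ⟨a, b⟩
          = wt ⟨a, n + 1⟩ + ∑ b ∈ Finset.Icc a n, wt ⟨a, b⟩ := by
      intro a ha
      rw [Finset.mem_range] at ha
      rw [Icc_split a n (by omega), Finset.sum_insert (by simp)]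
    rw [hdecomp, Finset.sum_congr rfl hstep, Finset.sum_add_distrib]
    have hlast : ∑ a ∈ Finset.range (n + 2), ∑ b ∈ Finset.Icc a n, wt ⟨a, b⟩
        = ∑ p ∈ pairs n, wt p := by
      rw [pairs, Finset.sum_sigma, Finset.sum_range_succ]
      have : Finset.Icc (n + 1) n = ∅ := by
        rw [Finset.Icc_eq_empty_iff]; omega
      rw [this]
      simp
    have hcol : ∑ a ∈ Finset.range (n + 2), wt ⟨a, n + 1⟩ = H (n + 3) - 1 := by
      rw [← colSum n]
      apply Finset.sum_congr rfl
      intro a _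
      rw [wt]
      push_cast
      congr 1
      ring
    rw [hlast, hcol, ih]
    have h1 : H (n + 3) = H (n + 2) + 1 / ((n : ℝ) + 3) := by
      have h := H_succ (n + 2)
      rw [show n + 2 + 1 = n + 3 from by omega] at h
      push_cast at h ⊢
      ring_nf at h ⊢
      linarith
    push_cast
    rw [h1]
    have h3 : ((n : ℝ) + 3) ≠ 0 := by positivity
    field_simp
    ring

lemma log_step (k : ℕ) (hk : 1 ≤ k) :
    Real.log (k + 1) - Real.log k ≤ 1 / (k : ℝ) := by
  have hk0 : (0 : ℝ) < k := by exact_mod_cast hk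
  have hx : (0 : ℝ) < ((k : ℝ) + 1) / k := by positivity
  have h := Real.log_le_sub_one_of_pos hx
  rw [Real.log_div (by positivity) (by positivity)] at h
  have : ((k : ℝ) + 1) / k - 1 = 1 / k := by field_simp; ring
  linarith [this ▸ h]

lemma tail_ge (a b : ℕ) (ha : 1 ≤ a) (h : a ≤ b) :
    Real.log (b + 1) - Real.log (a + 1) ≤ ∑ i ∈ Finset.Ioc a b, (1 : ℝ) / i := by
  induction b, h using Nat.le_induction with
  | base => simp
  | succ b hb ih =>
    rw [Finset.sum_Ioc_succ_top hb]
    have h1 := log_step (b + 1) (by omega)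
    push_cast at h1 ⊢
    linarith

lemma H_sub (a b : ℕ) (h : a ≤ b) :
    H b - H a = ∑ i ∈ Finset.Ioc a b, (1 : ℝ) / i := by
  have hc : ∑ i ∈ Finset.Ioc (0 : ℕ) a, (1 : ℝ) / i + ∑ i ∈ Finset.Ioc (a : ℕ) b, (1 : ℝ) / i
      = ∑ i ∈ Finset.Ioc (0 : ℕ) b, (1 : ℝ) / i :=
    Finset.sum_Ioc_consecutive (fun i : ℕ => (1 : ℝ) / i) (by omega) h
  have h1 : H a = ∑ i ∈ Finset.Ioc (0 : ℕ) a, (1 : ℝ) / i := by rw [H, ← Finset.Icc_add_one_left_eq_Ioc]; rfl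
  have h2 : H b = ∑ i ∈ Finset.Ioc (0 : ℕ) b, (1 : ℝ) / i := by rw [H, ← Finset.Icc_add_one_left_eq_Ioc]; rfl
  rw [h1, h2]
  linarith

lemma H_le_log (k : ℕ) (hk : 1 ≤ k) : H k ≤ 1 + Real.log k := by
  induction k, hk using Nat.le_induction with
  | base =>
    have : H 1 = 1 := by rw [H]; simp
    simp [this]
  | succ k hk ih =>
    have hstep : H (k + 1) = H k + 1 / ((k : ℝ) + 1) := by
      rw [H, H, Finset.sum_Icc_succ_top (by omega)]
      push_cast; ring
    have h1 := log_step k hk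
    have hk0 : (0 : ℝ) < k := by exact_mod_cast hk
    have h2 : 1 / ((k : ℝ) + 1) ≤ Real.log (k + 1) - Real.log k := by
      have hx : (0 : ℝ) < (k : ℝ) / ((k : ℝ) + 1) := by positivity
      have h := Real.log_le_sub_one_of_pos hx
      rw [Real.log_div (by positivity) (by positivity)] at h
      have he : (k : ℝ) / ((k : ℝ) + 1) - 1 = -(1 / ((k : ℝ) + 1)) := by field_simp; ring
      rw [he] at h
      linarith
    push_cast
    linarith

lemma analytic (n : ℕ) (hn : 1 ≤ n) :
    ((n : ℝ) + 4) * H ((n + 1) / 2) - (3 * (n : ℝ) + 8) / 2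
      ≤ ((n : ℝ) + 3) * H (n + 1) - (2 * (n : ℝ) + 3) := by
  set mb := (n + 1) / 2 with hmbdef
  have hmb1 : 1 ≤ mb := by omega
  have hmb2 : 2 * mb ≤ n + 1 := by omega
  have hmb3 : mb ≤ n + 1 := by omega
  set N := (n : ℝ) with hNdef
  have hN1 : (1 : ℝ) ≤ N := by rw [hNdef]; exact_mod_cast hn
  set L := Real.log 2 with hLdef
  set X := H (n + 1) with hXdef
  set Y := H mb with hYdef
  have hmbR : ((mb : ℝ)) * 2 ≤ N + 1 := by
    have : ((2 * mb : ℕ) : ℝ) ≤ ((n + 1 : ℕ) : ℝ) := by exact_mod_cast hmb2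
    push_cast at this; linarith
  have hmbR1 : (1 : ℝ) ≤ (mb : ℝ) := by exact_mod_cast hmb1
  -- difference bound
  have hD : L - 1 / (N + 2) ≤ X - Y := by
    have ht := tail_ge mb (n + 1) hmb1 hmb3
    have hs := H_sub mb (n + 1) hmb3
    rw [← hs] at ht
    push_cast at ht
    rw [← hXdef, ← hYdef] at ht
    rw [show ((n : ℝ) + 1 + 1) = N + 2 from by rw [hNdef]; ring] at ht
    -- ht : log (N + 2) - log (mb + 1) ≤ X - Y
    have h2 : Real.log ((mb : ℝ) + 1) ≤ Real.log ((N + 3) / 2) := by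
      apply Real.log_le_log (by positivity)
      linarith
    have h3 : Real.log ((N + 3) / 2) = Real.log (N + 3) - L := by
      rw [hLdef, Real.log_div (by positivity) (by norm_num)]
    have h4 : Real.log (N + 3) ≤ Real.log (N + 2) + 1 / (N + 2) := by
      have hx : (0 : ℝ) < (N + 3) / (N + 2) := by positivity
      have h := Real.log_le_sub_one_of_pos hx
      rw [Real.log_div (by positivity) (by positivity)] at h
      have he : (N + 3) / (N + 2) - 1 = 1 / (N + 2) := by
        field_simp
        norm_num
      linarith [h, he]
    linarith
  have hfr : (N + 3) * (1 / (N + 2)) ≤ 3 / 2 := by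
    rw [mul_one_div, div_le_iff₀ (by positivity)]
    linarith
  have key : (N + 3) * X - (N + 3) * Y ≥ (N + 3) * L - 3 / 2 := by
    have h := mul_le_mul_of_nonneg_left hD (show (0 : ℝ) ≤ N + 3 by linarith)
    nlinarith [h]
  -- bound on Y
  have hY : Y ≤ (N + 1) / 6 + L + 1 / 2 := by
    have h5 := H_le_log mb hmb1
    have h6 : Real.log (mb : ℝ) ≤ Real.log (N + 1) - L := by
      have hm : (mb : ℝ) ≤ (N + 1) / 2 := by linarith
      have := Real.log_le_log (by positivity) hm
      rw [Real.log_div (by positivity) (by norm_num)] at this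
      linarith
    have h7 : Real.log (N + 1) ≤ (N + 1) / 6 + Real.log 6 - 1 := by
      have hx : (0 : ℝ) < (N + 1) / 6 := by positivity
      have h := Real.log_le_sub_one_of_pos hx
      rw [Real.log_div (by positivity) (by norm_num)] at h
      linarith
    have h8 : Real.log 6 ≤ 2 * L + 1 / 2 := by
      have l1 : Real.log 6 = L + Real.log 3 := by
        rw [hLdef, ← Real.log_mul (by norm_num) (by norm_num)]
        norm_num
      have l2 : Real.log 3 = L + Real.log (3 / 2) := by
        rw [hLdef, ← Real.log_mul (by norm_num) (by norm_num)]
        norm_num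
      have l3 : Real.log (3 / 2) ≤ 1 / 2 := by
        have h := Real.log_le_sub_one_of_pos (show (0 : ℝ) < 3 / 2 by norm_num)
        linarith
      linarith
    linarith
  have h9 : (0.6931471803 : ℝ) < L := Real.log_two_gt_d9
  have hNL : (0.6931471803 : ℝ) * N ≤ L * N := by
    apply mul_le_mul_of_nonneg_right h9.le
    linarith
  nlinarith [key, hY, hNL, h9, hN1]

noncomputable def injColouring (n : ℕ) : Finset ℕ → ℕ := fun S =>
  if h : S.Nonempty then (n + 1) * S.min' h + S.max' h + 1 else 1

lemma injColouring_Icc (n a b : ℕ) (hab : a ≤ b) :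
    injColouring n (Finset.Icc a b) = (n + 1) * a + b + 1 := by
  have hne : (Finset.Icc a b).Nonempty := Finset.nonempty_Icc.2 hab
  have hmin : (Finset.Icc a b).min' hne = a := by
    apply le_antisymm
    · exact Finset.min'_le _ _ (Finset.mem_Icc.2 ⟨le_refl a, hab⟩)
    · apply Finset.le_min'
      intro y hy
      exact (Finset.mem_Icc.1 hy).1
  have hmax : (Finset.Icc a b).max' hne = b := by
    apply le_antisymm
    · apply Finset.max'_le
      intro y hy
      exact (Finset.mem_Icc.1 hy).2
    · exact Finset.le_max' _ _ (Finset.mem_Icc.2 ⟨hab, le_refl b⟩)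
  rw [injColouring]
  rw [dif_pos hne, hmin, hmax]

lemma colouring_exists (n : ℕ) :
    ∃ f : Finset ℕ → ℕ, IsProperColouringAssoc n ((n + 1) ^ 2) f := by
  refine ⟨injColouring n, ?_, ?_⟩
  · rintro S ⟨a, b, hab, hbn, rfl, -⟩
    rw [injColouring_Icc n a b hab, Finset.mem_Icc]
    constructor
    · omega
    · have h2 : (n + 1) ^ 2 = (n + 1) * n + n + 1 := by ring
      have h3 : (n + 1) * a ≤ (n + 1) * n := Nat.mul_le_mul_left _ (le_trans hab hbn)
      omega
  · rintro S T ⟨a, b, hab, hbn, rfl, -⟩ ⟨c, d, hcd, hdn, rfl, -⟩ hne hcol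
    exfalso
    rw [injColouring_Icc n a b hab, injColouring_Icc n c d hcd] at hcol
    have heq : (n + 1) * a + b = (n + 1) * c + d := by omega
    have hb : b < n + 1 := by omega
    have hd : d < n + 1 := by omega
    have hac : a = c := by
      have h1 : ((n + 1) * a + b) / (n + 1) = a := by
        rw [Nat.mul_add_div (by omega)]
        rw [Nat.div_eq_of_lt hb]
        omega
      have h2 : ((n + 1) * c + d) / (n + 1) = c := by
        rw [Nat.mul_add_div (by omega)]
        rw [Nat.div_eq_of_lt hd]
        omega
      rw [← h1, ← h2, heq]
    subst hac
    have hbd : b = d := by omega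
    subst hbd
    exact hne rfl

lemma sum_segPairs_le {n m : ℕ} {f : Finset ℕ → ℕ} (hf : IsProperColouringAssoc n m f) :
    ∑ p ∈ segPairs n, wt p ≤ (m : ℝ) := by
  classical
  have hmaps : ∀ p ∈ segPairs n, f (Finset.Icc p.1 p.2) ∈ Finset.Icc 1 m :=
    fun p hp => hf.1 _ (segment_of_mem hp)
  rw [← Finset.sum_fiberwise_of_maps_to hmaps wt]
  have hfib : ∀ c ∈ Finset.Icc 1 m,
      ∑ p ∈ (segPairs n).filter (fun q => f (Finset.Icc q.1 q.2) = c), wt p ≤ 1 := by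
    intro c _
    set C := (segPairs n).filter (fun q => f (Finset.Icc q.1 q.2) = c) with hC
    have hCsub : ∀ p ∈ C, p ∈ segPairs n := fun p hp => (Finset.mem_filter.1 hp).1
    have hle : ∀ p ∈ C, p.1 ≤ p.2 := fun p hp => (mem_segPairs.1 (hCsub p hp)).1
    have hrel : ∀ p ∈ C, ∀ q ∈ C, p ≠ q →
        (p.1 + 1 ≤ q.1 ∧ q.1 ≤ p.2 + 1 ∧ p.2 < q.2) ∨
        (q.1 + 1 ≤ p.1 ∧ p.1 ≤ q.2 + 1 ∧ q.2 < p.2) := by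
      intro p hp q hq hne
      have hp' := mem_segPairs.1 (hCsub p hp)
      have hq' := mem_segPairs.1 (hCsub q hq)
      have hcp := (Finset.mem_filter.1 hp).2
      have hcq := (Finset.mem_filter.1 hq).2
      exact rel_of_same_colour hf hp'.1 hp'.2.1 hq'.1 hq'.2.1
        (segment_of_mem (hCsub p hp)) (segment_of_mem (hCsub q hq))
        (np_ne_iff.1 hne) (by rw [hcp, hcq])
    exact sum_wt_le_one hle (fun p hp => card_bound hle hrel hp)
  calc ∑ c ∈ Finset.Icc 1 m,
        ∑ p ∈ (segPairs n).filter (fun q => f (Finset.Icc q.1 q.2) = c), wt p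
      ≤ ∑ _c ∈ Finset.Icc 1 m, (1 : ℝ) := Finset.sum_le_sum hfib
    _ = m := by simp

end AssocAux

open AssocAux in
/-- Inequality (1): `α_n ≥ n·(1 + 1/2 + ⋯ + 1/⌈n/2⌉) + 4·(1 + 1/2 + ⋯ + 1/⌈n/2⌉) − (3n+8)/2`. -/
theorem assocChromatic_lower_bound (n : ℕ) (hn : 1 ≤ n) :
    (assocChromatic n : ℝ) ≥
      (n : ℝ) * (∑ i ∈ Finset.Icc 1 ((n + 1) / 2), (1 : ℝ) / i) +
        4 * (∑ i ∈ Finset.Icc 1 ((n + 1) / 2), (1 : ℝ) / i) -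
        (3 * (n : ℝ) + 8) / 2 := by
  classical
  have hmem : assocChromatic n ∈ {m : ℕ | ∃ f : Finset ℕ → ℕ, IsProperColouringAssoc n m f} :=
    Nat.sInf_mem ⟨(n + 1) ^ 2, colouring_exists n⟩
  obtain ⟨f, hf⟩ := hmem
  -- the weighted count of segments is at most the number of colours
  have hsum_le : ∑ p ∈ segPairs n, wt p ≤ (assocChromatic n : ℝ) :=
    sum_segPairs_le hf
  -- the exact value of the weighted count
  have hval : ∑ p ∈ segPairs n, wt p = ((n : ℝ) + 3) * H (n + 1) - (2 * (n : ℝ) + 3) := by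
    have hmem0 : (⟨0, n⟩ : NP) ∈ pairs n := mem_pairs.2 ⟨Nat.zero_le n, le_refl n⟩
    have hdec := Finset.sum_erase_add (pairs n) wt hmem0
    have hw0 : wt ⟨0, n⟩ = ((n : ℝ) + 2)⁻¹ := by rw [wt]; norm_num
    have hF := F_formula n
    have hH : H (n + 2) = H (n + 1) + 1 / ((n : ℝ) + 2) := by
      have h := H_succ (n + 1)
      rw [show n + 1 + 1 = n + 2 from by omega] at h
      push_cast at h ⊢
      ring_nf at h ⊢
      linarith
    have hne2 : ((n : ℝ) + 2) ≠ 0 := by positivity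
    have hstep : ∑ p ∈ segPairs n, wt p = ∑ p ∈ pairs n, wt p - ((n : ℝ) + 2)⁻¹ := by
      rw [segPairs]
      linarith [hdec, hw0]
    rw [hstep, hF, hH]
    field_simp
    ring
  have hanal := analytic n hn
  have hdef : (∑ i ∈ Finset.Icc 1 ((n + 1) / 2), (1 : ℝ) / i) = H ((n + 1) / 2) := rfl
  rw [hdef, ge_iff_le]
  linarith
end

section
/- For every n ≥ 1, the chromatic number α_n of the n-dimensional associahedron satisfies α_n ≤ n·(1/1 + 1/2 + ⋯ + 1/(⌈n/2⌉+1)) + 3·(1/1 + 1/2 + ⋯ + 1/(⌈n/2⌉+1)). -/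
/-! ### An explicit colouring -/

/-- Number of colours used for segments with `j` points. -/
def segW (n j : ℕ) : ℕ := (n + 1 - j) / (j + 1) + 1

/-- Cumulative colour count. -/
def segA (n l : ℕ) : ℕ := ∑ j ∈ Finset.Icc 1 l, segW n j

/-- Colour of the segment `[a,b]`. -/
def segCol (n a b : ℕ) : ℕ := segA n (b - a) + a / (b - a + 2) + 1

/-- The colouring function. -/
def segF (n : ℕ) (S : Finset ℕ) : ℕ :=
  if h : S.Nonempty then segCol n (S.min' h) (S.max' h) else 1

lemma segA_mono (n : ℕ) {k l : ℕ} (h : k ≤ l) : segA n k ≤ segA n l :=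
  Finset.sum_le_sum_of_subset (Finset.Icc_subset_Icc_right h)

lemma segA_succ (n d : ℕ) : segA n (d + 1) = segA n d + segW n (d + 1) := by
  unfold segA
  rw [← Finset.sum_Icc_succ_top (by omega : 1 ≤ d + 1)]

lemma segKey (n a d : ℕ) (h : a + d ≤ n) :
    segA n d + a / (d + 2) + 1 ≤ segA n (d + 1) := by
  have h1 : a / (d + 2) + 1 ≤ segW n (d + 1) := by
    have h2 : a ≤ n + 1 - (d + 1) := by omega
    have h3 := Nat.div_le_div_right (c := d + 2) h2
    have h4 : segW n (d + 1) = (n + 1 - (d + 1)) / (d + 2) + 1 := rfl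
    omega
  rw [segA_succ, Nat.add_assoc]
  exact Nat.add_le_add_left h1 _

lemma segCol_le (n a b : ℕ) (hab : a ≤ b) (hbn : b ≤ n) (hlen : b - a + 1 ≤ n) :
    segCol n a b ≤ segA n n := by
  have h1 : segCol n a b ≤ segA n (b - a + 1) := segKey n a (b - a) (by omega)
  exact h1.trans (segA_mono n (by omega))

lemma segCol_lt (n a b a' b' : ℕ) (hab : a ≤ b) (hbn : b ≤ n)
    (h : b - a < b' - a') : segCol n a b < segCol n a' b' := by
  have h1 : segCol n a b ≤ segA n (b - a + 1) := segKey n a (b - a) (by omega)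
  have h2 : segA n (b - a + 1) ≤ segA n (b' - a') := segA_mono n (by omega)
  have h3 : segA n (b' - a') < segCol n a' b' := by
    unfold segCol
    generalize a' / (b' - a' + 2) = y
    omega
  omega

lemma segCol_len_eq (n a b a' b' : ℕ) (hab : a ≤ b) (hbn : b ≤ n)
    (hab' : a' ≤ b') (hbn' : b' ≤ n) (h : segCol n a b = segCol n a' b') :
    b - a = b' - a' := by
  rcases Nat.lt_trichotomy (b - a) (b' - a') with hlt | heq | hgt
  · exact absurd h (Nat.ne_of_lt (segCol_lt n a b a' b' hab hbn hlt))
  · exact heq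
  · exact absurd h.symm (Nat.ne_of_lt (segCol_lt n a' b' a b hab' hbn' hgt))

lemma div_window {a c k : ℕ} (hk : 0 < k) (h : a / k = c / k) :
    a < c + k ∧ c < a + k := by
  have h1 := Nat.div_add_mod a k
  have h2 := Nat.div_add_mod c k
  rw [h] at h1
  have h3 : a % k < k := Nat.mod_lt _ hk
  have h4 : c % k < k := Nat.mod_lt _ hk
  set t := k * (c / k) with ht
  set r := a % k with hr
  set s := c % k with hs
  omega

lemma min'_Icc (a b : ℕ) (hab : a ≤ b) (h : (Finset.Icc a b).Nonempty) :
    (Finset.Icc a b).min' h = a := by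
  apply le_antisymm
  · exact Finset.min'_le _ _ (Finset.mem_Icc.mpr ⟨le_refl a, hab⟩)
  · apply Finset.le_min'
    intro y hy
    exact (Finset.mem_Icc.mp hy).1

lemma max'_Icc (a b : ℕ) (hab : a ≤ b) (h : (Finset.Icc a b).Nonempty) :
    (Finset.Icc a b).max' h = b := by
  apply le_antisymm
  · apply Finset.max'_le
    intro y hy
    exact (Finset.mem_Icc.mp hy).2
  · exact Finset.le_max' _ _ (Finset.mem_Icc.mpr ⟨hab, le_refl b⟩)

lemma segF_eq (n a b : ℕ) (hab : a ≤ b) :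
    segF n (Finset.Icc a b) = segCol n a b := by
  have hne : (Finset.Icc a b).Nonempty := Finset.nonempty_Icc.mpr hab
  rw [segF, dif_pos hne, min'_Icc a b hab hne, max'_Icc a b hab hne]

lemma seg_len_le (n a b : ℕ) (hab : a ≤ b) (h : Finset.Icc a b ⊂ Finset.range (n + 1)) :
    b - a + 1 ≤ n := by
  have h1 := Finset.card_lt_card h
  rw [Nat.card_Icc, Finset.card_range] at h1
  omega

lemma segF_proper (n : ℕ) : IsProperColouringAssoc n (segA n n) (segF n) := by
  constructor
  · rintro S ⟨a, b, hab, hbn, rfl, hss⟩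
    rw [segF_eq n a b hab, Finset.mem_Icc]
    refine ⟨Nat.succ_le_succ (Nat.zero_le _), ?_⟩
    exact segCol_le n a b hab hbn (seg_len_le n a b hab hss)
  · rintro S T ⟨a, b, hab, hbn, rfl, hS⟩ ⟨c, d, hcd, hdn, rfl, hT⟩ hne hcol
    rw [segF_eq n a b hab, segF_eq n c d hcd] at hcol
    have hlen : b - a = d - c := segCol_len_eq n a b c d hab hbn hcd hdn hcol
    have hwin : a / (b - a + 2) = c / (b - a + 2) := by
      unfold segCol at hcol
      rw [← hlen] at hcol
      generalize a / (b - a + 2) = p at hcol ⊢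
      generalize c / (b - a + 2) = q at hcol ⊢
      omega
    have hdw := div_window (a := a) (c := c) (k := b - a + 2) (by omega) hwin
    have hane : a ≠ c := by
      intro hac
      apply hne
      have : b = d := by omega
      rw [hac, this]
    rcases Nat.lt_or_ge a c with hlt | hge
    · left
      exact ⟨a, b, c, d, hab, hbn, hcd, hdn, rfl, rfl, by omega, by omega, by omega⟩
    · right
      exact ⟨c, d, a, b, hcd, hdn, hab, hbn, rfl, rfl, by omega, by omega, by omega⟩

/-! ### The numerical bound -/

lemma segA_real_bound (n : ℕ) (hn : 1 ≤ n) :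
    (segA n n : ℝ) ≤ ((n : ℝ) + 3) * ∑ i ∈ Finset.Icc 1 ((n + 1) / 2 + 1), (1 : ℝ) / i := by
  set M := (n + 1) / 2 + 1 with hM
  have hM1 : 1 ≤ M := by omega
  have hMn : M ≤ n + 1 := by omega
  -- Step 1: cast bound on each segW
  have hW : ∀ j ∈ Finset.Icc 1 n, (segW n j : ℝ) ≤ ((n : ℝ) + 2) / ((j : ℝ) + 1) := by
    intro j hj
    rw [Finset.mem_Icc] at hj
    have hjpos : (0 : ℝ) < (j : ℝ) + 1 := by positivity
    have key : (((n + 1 - j) / (j + 1) : ℕ) : ℝ) ≤ ((n : ℝ) + 1 - j) / ((j : ℝ) + 1) := by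
      calc (((n + 1 - j) / (j + 1) : ℕ) : ℝ)
          ≤ ((n + 1 - j : ℕ) : ℝ) / ((j + 1 : ℕ) : ℝ) := Nat.cast_div_le
        _ = ((n : ℝ) + 1 - j) / ((j : ℝ) + 1) := by
            rw [Nat.cast_sub (by omega)]
            push_cast
            ring_nf
    have h2 : ((n : ℝ) + 2) / ((j : ℝ) + 1) = ((n : ℝ) + 1 - j) / ((j : ℝ) + 1) + 1 := by
      field_simp
      ring
    rw [segW]
    push_cast
    rw [h2]
    linarith
  -- Step 2: sum bound
  have hsum : (segA n n : ℝ) ≤ ((n : ℝ) + 2) * ∑ j ∈ Finset.Icc 1 n, (1 : ℝ) / ((j : ℝ) + 1) := by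
    rw [segA, Nat.cast_sum, Finset.mul_sum]
    apply Finset.sum_le_sum
    intro j hj
    have := hW j hj
    rw [mul_one_div]
    exact this
  -- Step 3: reindex  ∑_{j=1}^n 1/(j+1) = ∑_{i=2}^{n+1} 1/i = H_{n+1} - 1
  have hre : ∑ j ∈ Finset.Icc 1 n, (1 : ℝ) / ((j : ℝ) + 1)
      = (∑ i ∈ Finset.Icc 1 (n + 1), (1 : ℝ) / i) - 1 := by
    have h1 : Finset.Icc 1 (n + 1) = insert 1 (Finset.Icc 2 (n + 1)) := by
      ext x
      simp only [Finset.mem_Icc, Finset.mem_insert]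
      omega
    rw [h1, Finset.sum_insert (by simp)]
    have h2 : ∑ j ∈ Finset.Icc 1 n, (1 : ℝ) / ((j : ℝ) + 1)
        = ∑ i ∈ Finset.Icc 2 (n + 1), (1 : ℝ) / i := by
      have hmap : Finset.Icc (2 : ℕ) (n + 1) =
          Finset.map (addRightEmbedding 1) (Finset.Icc 1 n) := by
        rw [Finset.map_add_right_Icc]
      rw [hmap, Finset.sum_map]
      apply Finset.sum_congr rfl
      intro j _
      simp [addRightEmbedding]
    rw [h2]
    norm_num
  -- Step 4: H_{n+1} - 1 ≤ H_M
  have htail : (∑ i ∈ Finset.Icc 1 (n + 1), (1 : ℝ) / i) - 1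
      ≤ ∑ i ∈ Finset.Icc 1 M, (1 : ℝ) / i := by
    have hsplit : ∑ i ∈ Finset.Icc 1 (n + 1), (1 : ℝ) / i
        = (∑ i ∈ Finset.Icc 1 M, (1 : ℝ) / i) + ∑ i ∈ Finset.Icc (M + 1) (n + 1), (1 : ℝ) / i := by
      rw [← Finset.sum_union]
      · congr 1
        ext x
        simp only [Finset.mem_Icc, Finset.mem_union]
        omega
      · rw [Finset.disjoint_left]
        intro x hx hx'
        rw [Finset.mem_Icc] at hx hx'
        omega
    rw [hsplit]
    have hbnd : ∑ i ∈ Finset.Icc (M + 1) (n + 1), (1 : ℝ) / i ≤ 1 := by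
      have h1 : ∀ i ∈ Finset.Icc (M + 1) (n + 1), (1 : ℝ) / i ≤ 1 / ((M : ℝ) + 1) := by
        intro i hi
        rw [Finset.mem_Icc] at hi
        apply div_le_div_of_nonneg_left (by norm_num) (by positivity)
        have : (M + 1 : ℕ) ≤ i := hi.1
        exact_mod_cast this
      calc ∑ i ∈ Finset.Icc (M + 1) (n + 1), (1 : ℝ) / i
          ≤ ∑ _i ∈ Finset.Icc (M + 1) (n + 1), 1 / ((M : ℝ) + 1) :=
            Finset.sum_le_sum h1
        _ = ((n + 1 - M : ℕ) : ℝ) * (1 / ((M : ℝ) + 1)) := by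
            rw [Finset.sum_const, Nat.card_Icc]
            push_cast
            ring_nf
        _ ≤ 1 := by
            rw [mul_one_div, div_le_one (by positivity)]
            have : n + 1 - M ≤ M + 1 := by omega
            calc ((n + 1 - M : ℕ) : ℝ) ≤ ((M + 1 : ℕ) : ℝ) := by exact_mod_cast this
              _ = (M : ℝ) + 1 := by push_cast; ring
    linarith
  have hpos : 0 ≤ ∑ i ∈ Finset.Icc 1 M, (1 : ℝ) / i := by
    apply Finset.sum_nonneg
    intro i _
    positivity
  calc (segA n n : ℝ)
      ≤ ((n : ℝ) + 2) * ((∑ i ∈ Finset.Icc 1 (n + 1), (1 : ℝ) / i) - 1) := by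
        rw [← hre]; exact hsum
    _ ≤ ((n : ℝ) + 2) * ∑ i ∈ Finset.Icc 1 M, (1 : ℝ) / i := by
        apply mul_le_mul_of_nonneg_left htail (by positivity)
    _ ≤ ((n : ℝ) + 3) * ∑ i ∈ Finset.Icc 1 M, (1 : ℝ) / i := by
        apply mul_le_mul_of_nonneg_right _ hpos
        linarith

/-- Inequality (2): `α_n ≤ n·(1 + 1/2 + ⋯ + 1/(⌈n/2⌉+1)) + 3·(1 + 1/2 + ⋯ + 1/(⌈n/2⌉+1))`. -/
theorem assocChromatic_upper_bound (n : ℕ) (hn : 1 ≤ n) :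
    (assocChromatic n : ℝ) ≤
      (n : ℝ) * (∑ i ∈ Finset.Icc 1 ((n + 1) / 2 + 1), (1 : ℝ) / i) +
        3 * (∑ i ∈ Finset.Icc 1 ((n + 1) / 2 + 1), (1 : ℝ) / i) := by
  have hmem : segA n n ∈ {m : ℕ | ∃ f : Finset ℕ → ℕ, IsProperColouringAssoc n m f} :=
    ⟨segF n, segF_proper n⟩
  have h1 : assocChromatic n ≤ segA n n := Nat.sInf_le hmem
  have h2 : (assocChromatic n : ℝ) ≤ (segA n n : ℝ) := by exact_mod_cast h1
  have h3 := segA_real_bound n hn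
  have h4 : (n : ℝ) * (∑ i ∈ Finset.Icc 1 ((n + 1) / 2 + 1), (1 : ℝ) / i) +
        3 * (∑ i ∈ Finset.Icc 1 ((n + 1) / 2 + 1), (1 : ℝ) / i)
      = ((n : ℝ) + 3) * ∑ i ∈ Finset.Icc 1 ((n + 1) / 2 + 1), (1 : ℝ) / i := by ring
  rw [h4]
  linarith
end

section
/- Two cyclic segments X and Y of [n]₀ are incomparable with respect to inclusion and their union is either a cyclic segment of [n]₀ or all of [n]₀ if and only if one of X, Y precedes the other. -/
/-- The cyclic segment `[a,b]` of `[n]₀ = {0,...,n}`: the set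
`{i : a ≤ i ≤ b}` if `a ≤ b`, and `{i : a ≤ i ≤ n} ∪ {i : 0 ≤ i ≤ b}` if `a > b`. -/
def CSeg (n a b : ℕ) : Finset ℕ :=
  if a ≤ b then Finset.Icc a b else Finset.Icc a n ∪ Finset.Icc 0 b

/-- `(a, b)` are the endpoints of a genuine cyclic segment of `[n]₀`: `a, b ∈ [n]₀`
and `[a,b]` is a proper subset of `[n]₀`. -/
def IsCSeg (n a b : ℕ) : Prop :=
  a ≤ n ∧ b ≤ n ∧ CSeg n a b ⊂ Finset.range (n + 1)

/-- `[c,d]` overlaps `[a,b]`: `c > a` and the two cyclic segments are neither disjoint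
nor comparable with respect to inclusion. -/
def COverlaps (n a b c d : ℕ) : Prop :=
  c > a ∧ (CSeg n a b ∩ CSeg n c d).Nonempty ∧
    ¬ CSeg n a b ⊆ CSeg n c d ∧ ¬ CSeg n c d ⊆ CSeg n a b

/-- `[c,d]` follows `[a,b]`: `b ⊞ 1 = c`, where `⊞` is addition modulo `n + 1`. -/
def CFollows (n a b c d : ℕ) : Prop :=
  (b + 1) % (n + 1) = c

/-- `[a,b]` precedes `[c,d]`: `[c,d]` overlaps `[a,b]` or `[c,d]` follows `[a,b]`. -/
def CPrecedes (n a b c d : ℕ) : Prop :=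
  COverlaps n a b c d ∨ CFollows n a b c d

lemma mem_cseg {n a b i : ℕ} (hb : b ≤ n) :
    i ∈ CSeg n a b ↔ ((a ≤ b ∧ a ≤ i ∧ i ≤ b) ∨ (b < a ∧ i ≤ n ∧ (a ≤ i ∨ i ≤ b))) := by
  unfold CSeg; split <;> simp [Finset.mem_Icc, Finset.mem_union] <;> omega

lemma succ_cases {n b : ℕ} (hb : b ≤ n) :
    (b = n ∧ (b+1) % (n+1) = 0) ∨ (b < n ∧ (b+1) % (n+1) = b+1) := by
  rcases eq_or_lt_of_le hb with h | h
  · left; subst h; simp [Nat.mod_self]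
  · right; exact ⟨h, Nat.mod_eq_of_lt (by omega)⟩

lemma isCSeg_iff {n a b : ℕ} :
    IsCSeg n a b ↔ a ≤ n ∧ b ≤ n ∧ ¬(a = 0 ∧ b = n) ∧ (b < a → b + 2 ≤ a) := by
  constructor
  · rintro ⟨ha, hb, hss⟩
    obtain ⟨x, hx, hxn⟩ := Finset.exists_of_ssubset hss
    rw [Finset.mem_range] at hx
    rw [mem_cseg hb] at hxn
    exact ⟨ha, hb, by omega, by omega⟩
  · rintro ⟨ha, hb, h1, h2⟩
    refine ⟨ha, hb, ?_⟩
    have hsub : CSeg n a b ⊆ Finset.range (n+1) := by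
      intro x hx; rw [mem_cseg hb] at hx; rw [Finset.mem_range]; omega
    rw [Finset.ssubset_iff_of_subset hsub]
    by_cases hab : a ≤ b
    · by_cases ha0 : a = 0
      · exact ⟨b+1, by rw [Finset.mem_range]; omega, by rw [mem_cseg hb]; omega⟩
      · exact ⟨0, by rw [Finset.mem_range]; omega, by rw [mem_cseg hb]; omega⟩
    · exact ⟨b+1, by rw [Finset.mem_range]; omega, by rw [mem_cseg hb]; omega⟩

lemma key_lemma (n : ℕ) (a b c d : ℕ) (hX : IsCSeg n a b) (hY : IsCSeg n c d)
    (h : CPrecedes n a b c d) :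
    ((¬ CSeg n a b ⊆ CSeg n c d ∧ ¬ CSeg n c d ⊆ CSeg n a b) ∧
        ((∃ e f : ℕ, IsCSeg n e f ∧ CSeg n a b ∪ CSeg n c d = CSeg n e f) ∨
          CSeg n a b ∪ CSeg n c d = Finset.range (n + 1))) := by
  obtain ⟨ha, hb, hx1, hx2⟩ := isCSeg_iff.1 hX
  obtain ⟨hc, hd, hy1, hy2⟩ := isCSeg_iff.1 hY
  rcases h with ⟨hca, ⟨x, hx⟩, hXY, hYX⟩ | hfol
  · -- overlap case
    refine ⟨⟨hXY, hYX⟩, ?_⟩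
    rw [Finset.mem_inter, mem_cseg hb, mem_cseg hd] at hx
    by_cases hcX : (a ≤ b ∧ a ≤ c ∧ c ≤ b) ∨ (b < a ∧ c ≤ n ∧ (a ≤ c ∨ c ≤ b))
    · by_cases hdX : (a ≤ b ∧ a ≤ d ∧ d ≤ b) ∨ (b < a ∧ d ≤ n ∧ (a ≤ d ∨ d ≤ b))
      · -- Y starts and ends inside X but is not contained: union is everything
        right
        obtain ⟨y, hyY, hyX⟩ := Finset.not_subset.1 hYX
        rw [mem_cseg hd] at hyY
        rw [mem_cseg hb] at hyX
        ext i
        simp only [Finset.mem_union, mem_cseg hb, mem_cseg hd, Finset.mem_range]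
        omega
      · -- union is the cyclic segment [a, d]
        by_cases hW : (a = 0 ∧ d = n) ∨ (d < a ∧ a ≤ d + 1)
        · right; ext i
          simp only [Finset.mem_union, mem_cseg hb, mem_cseg hd, Finset.mem_range]
          omega
        · left
          refine ⟨a, d, isCSeg_iff.2 ⟨ha, hd, by omega, by omega⟩, ?_⟩
          ext i
          simp only [Finset.mem_union, mem_cseg hb, mem_cseg hd]
          omega
    · have haY : (c ≤ d ∧ c ≤ a ∧ a ≤ d) ∨ (d < c ∧ a ≤ n ∧ (c ≤ a ∨ a ≤ d)) := by omega
      by_cases hbY : (c ≤ d ∧ c ≤ b ∧ b ≤ d) ∨ (d < c ∧ b ≤ n ∧ (c ≤ b ∨ b ≤ d))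
      · right
        obtain ⟨y, hyX, hyY⟩ := Finset.not_subset.1 hXY
        rw [mem_cseg hb] at hyX
        rw [mem_cseg hd] at hyY
        ext i
        simp only [Finset.mem_union, mem_cseg hb, mem_cseg hd, Finset.mem_range]
        omega
      · by_cases hW : (c = 0 ∧ b = n) ∨ (b < c ∧ c ≤ b + 1)
        · right; ext i
          simp only [Finset.mem_union, mem_cseg hb, mem_cseg hd, Finset.mem_range]
          omega
        · left
          refine ⟨c, b, isCSeg_iff.2 ⟨hc, hb, by omega, by omega⟩, ?_⟩
          ext i
          simp only [Finset.mem_union, mem_cseg hb, mem_cseg hd]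
          omega
  · -- follows case : (b+1) % (n+1) = c
    unfold CFollows at hfol
    have hc' : (b = n ∧ c = 0) ∨ (b < n ∧ c = b + 1) := by
      rcases succ_cases hb with ⟨h1, h2⟩ | ⟨h1, h2⟩
      · rw [h2] at hfol; left; omega
      · rw [h2] at hfol; right; omega
    have hbX : b ∈ CSeg n a b := (mem_cseg hb).2 (by omega)
    have hcY : c ∈ CSeg n c d := (mem_cseg hd).2 (by omega)
    refine ⟨⟨?_, ?_⟩, ?_⟩
    · intro hsub
      have := hsub hbX
      rw [mem_cseg hd] at this
      omega
    · intro hsub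
      have := hsub hcY
      rw [mem_cseg hb] at this
      omega
    · by_cases hdX : (a ≤ b ∧ a ≤ d ∧ d ≤ b) ∨ (b < a ∧ d ≤ n ∧ (a ≤ d ∨ d ≤ b))
      · right; ext i
        simp only [Finset.mem_union, mem_cseg hb, mem_cseg hd, Finset.mem_range]
        omega
      · by_cases hW : (a = 0 ∧ d = n) ∨ (d < a ∧ a ≤ d + 1)
        · right; ext i
          simp only [Finset.mem_union, mem_cseg hb, mem_cseg hd, Finset.mem_range]
          omega
        · left
          refine ⟨a, d, isCSeg_iff.2 ⟨ha, hd, by omega, by omega⟩, ?_⟩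
          ext i
          simp only [Finset.mem_union, mem_cseg hb, mem_cseg hd]
          omega

lemma forward_dir (n : ℕ) (a b c d : ℕ) (hX : IsCSeg n a b) (hY : IsCSeg n c d)
    (hXY : ¬ CSeg n a b ⊆ CSeg n c d) (hYX : ¬ CSeg n c d ⊆ CSeg n a b)
    (hU : (∃ e f : ℕ, IsCSeg n e f ∧ CSeg n a b ∪ CSeg n c d = CSeg n e f) ∨
          CSeg n a b ∪ CSeg n c d = Finset.range (n + 1)) :
    CPrecedes n a b c d ∨ CPrecedes n c d a b := by
  obtain ⟨ha, hb, hx1, hx2⟩ := isCSeg_iff.1 hX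
  obtain ⟨hc, hd, hy1, hy2⟩ := isCSeg_iff.1 hY
  by_cases hI : (CSeg n a b ∩ CSeg n c d).Nonempty
  · have hac : a ≠ c := by
      intro h; subst h
      by_cases hdX : d ∈ CSeg n a b
      · refine hYX (fun i hi => ?_)
        rw [mem_cseg hb]
        rw [mem_cseg hd] at hi
        rw [mem_cseg hb] at hdX
        omega
      · refine hXY (fun i hi => ?_)
        rw [mem_cseg hb] at hdX
        rw [mem_cseg hd]
        rw [mem_cseg hb] at hi
        omega
    rcases lt_or_gt_of_ne hac with h | h
    · exact Or.inl (Or.inl ⟨h, hI, hXY, hYX⟩)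
    · refine Or.inr (Or.inl ⟨h, ?_, hYX, hXY⟩)
      rwa [Finset.inter_comm]
  · -- disjoint case: must be adjacency
    have hdisj : ∀ i, i ∈ CSeg n a b → i ∈ CSeg n c d → False := by
      intro i h1 h2
      exact hI ⟨i, Finset.mem_inter.2 ⟨h1, h2⟩⟩
    obtain ⟨gb, hgbe, hgbc⟩ : ∃ g, (b+1) % (n+1) = g ∧ ((b = n ∧ g = 0) ∨ (b < n ∧ g = b+1)) :=
      ⟨_, rfl, succ_cases hb⟩
    obtain ⟨gd, hgde, hgdc⟩ : ∃ g, (d+1) % (n+1) = g ∧ ((d = n ∧ g = 0) ∨ (d < n ∧ g = d+1)) :=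
      ⟨_, rfl, succ_cases hd⟩
    by_cases hbc : gb = c
    · refine Or.inl (Or.inr ?_)
      show (b+1) % (n+1) = c
      omega
    by_cases hda : gd = a
    · refine Or.inr (Or.inr ?_)
      show (d+1) % (n+1) = a
      omega
    exfalso
    have hbX : b ∈ CSeg n a b := (mem_cseg hb).2 (by omega)
    have hdY : d ∈ CSeg n c d := (mem_cseg hd).2 (by omega)
    have hbd : b ≠ d := fun h => hdisj b hbX (h ▸ hdY)
    have hgbX : gb ∉ CSeg n a b := by rw [mem_cseg hb]; omega
    have hgbY : gb ∉ CSeg n c d := by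
      intro hm
      rw [mem_cseg hd] at hm
      refine hdisj b hbX ((mem_cseg hd).2 ?_)
      omega
    have hgdY : gd ∉ CSeg n c d := by rw [mem_cseg hd]; omega
    have hgdX : gd ∉ CSeg n a b := by
      intro hm
      rw [mem_cseg hb] at hm
      refine hdisj d ((mem_cseg hb).2 ?_) hdY
      omega
    rcases hU with ⟨e, f, hef, hUeq⟩ | hfull
    · obtain ⟨he, hf, he1, he2⟩ := isCSeg_iff.1 hef
      have h1 : b ∈ CSeg n e f := by rw [← hUeq]; exact Finset.mem_union_left _ hbX
      have h2 : d ∈ CSeg n e f := by rw [← hUeq]; exact Finset.mem_union_right _ hdY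
      have h3 : gb ∉ CSeg n e f := by
        intro hm; rw [← hUeq] at hm
        rcases Finset.mem_union.1 hm with h | h
        exacts [hgbX h, hgbY h]
      have h4 : gd ∉ CSeg n e f := by
        intro hm; rw [← hUeq] at hm
        rcases Finset.mem_union.1 hm with h | h
        exacts [hgdX h, hgdY h]
      rw [mem_cseg hf] at h1 h2 h3 h4
      omega
    · have : gb ∈ Finset.range (n+1) := Finset.mem_range.2 (by omega)
      rw [← hfull] at this
      rcases Finset.mem_union.1 this with h | h
      exacts [hgbX h, hgbY h]

/-- Proposition (cyclohedron): two cyclic segments are incomparable with union a cyclic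
segment of `[n]₀` or all of `[n]₀` if and only if one of them precedes the other. -/
theorem cyclic_segments_separation_criterion (n : ℕ) (hn : 1 ≤ n)
    (a b c d : ℕ) (hX : IsCSeg n a b) (hY : IsCSeg n c d) :
    ((¬ CSeg n a b ⊆ CSeg n c d ∧ ¬ CSeg n c d ⊆ CSeg n a b) ∧
        ((∃ e f : ℕ, IsCSeg n e f ∧ CSeg n a b ∪ CSeg n c d = CSeg n e f) ∨
          CSeg n a b ∪ CSeg n c d = Finset.range (n + 1))) ↔
      (CPrecedes n a b c d ∨ CPrecedes n c d a b) := by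
  constructor
  · rintro ⟨⟨hXY, hYX⟩, hU⟩
    exact forward_dir n a b c d hX hY hXY hYX hU
  · rintro (h | h)
    · exact key_lemma n a b c d hX hY h
    · obtain ⟨⟨h1, h2⟩, h3⟩ := key_lemma n c d a b hY hX h
      rw [Finset.union_comm] at h3
      exact ⟨⟨h2, h1⟩, h3⟩
end

section
/- For every n ≥ 2, the chromatic number γ_n of the n-dimensional cyclohedron satisfies α_{n−1} + 1 ≤ γ_n ≤ α_{n−1} + n, where α_{n−1} is the chromatic number of the (n−1)-dimensional associahedron. -/
/-- `X` is a cyclic segment of `[n]₀` (as a set). -/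
def IsCSegSet (n : ℕ) (X : Finset ℕ) : Prop :=
  ∃ a b : ℕ, IsCSeg n a b ∧ X = CSeg n a b

/-- Two cyclic segments are separated when one of them precedes the other. -/
def CSegSeparated (n : ℕ) (X Y : Finset ℕ) : Prop :=
  ∃ a b c d : ℕ, IsCSeg n a b ∧ IsCSeg n c d ∧ X = CSeg n a b ∧ Y = CSeg n c d ∧
    (CPrecedes n a b c d ∨ CPrecedes n c d a b)

/-- A proper colouring of the `n`-dimensional cyclohedron with `m` colours:
a function from the cyclic segments of `[n]₀` to `{1,...,m}` such that any two
distinct cyclic segments of the same colour are separated. -/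
def IsProperColouringCyclo (n m : ℕ) (f : Finset ℕ → ℕ) : Prop :=
  (∀ X, IsCSegSet n X → f X ∈ Finset.Icc 1 m) ∧
  ∀ X Y, IsCSegSet n X → IsCSegSet n Y → X ≠ Y → f X = f Y → CSegSeparated n X Y

/-- The chromatic number `γ_n` of the `n`-dimensional cyclohedron. -/
noncomputable def cycloChromatic (n : ℕ) : ℕ :=
  sInf {m : ℕ | ∃ f : Finset ℕ → ℕ, IsProperColouringCyclo n m f}

-- ===================== auxiliary lemmas =====================


lemma cseg_of_le {n a b : ℕ} (h : a ≤ b) : CSeg n a b = Finset.Icc a b := if_pos h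

lemma mem_cseg_left {n a b : ℕ} (ha : a ≤ n) : a ∈ CSeg n a b := by
  unfold CSeg
  split_ifs with h
  · exact Finset.mem_Icc.2 ⟨le_rfl, h⟩
  · exact Finset.mem_union_left _ (Finset.mem_Icc.2 ⟨le_rfl, ha⟩)

lemma n_mem_cseg_wrap {n a b : ℕ} (h : ¬ a ≤ b) (ha : a ≤ n) : n ∈ CSeg n a b := by
  unfold CSeg
  rw [if_neg h]
  exact Finset.mem_union_left _ (Finset.mem_Icc.2 ⟨ha, le_rfl⟩)

lemma cseg_uniq {n a b a' b' : ℕ} (h : IsCSeg n a' b')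
    (heq : CSeg n a' b' = Finset.Icc a b) (hab : a ≤ b) (hb : b < n) :
    a' = a ∧ b' = b := by
  obtain ⟨ha', hb', _⟩ := h
  have hle : a' ≤ b' := by
    by_contra hlt
    have := n_mem_cseg_wrap hlt ha'
    rw [heq, Finset.mem_Icc] at this
    omega
  rw [cseg_of_le hle] at heq
  have h1 : a' ∈ Finset.Icc a b := by rw [← heq]; exact Finset.mem_Icc.2 ⟨le_rfl, hle⟩
  have h2 : a ∈ Finset.Icc a' b' := by rw [heq]; exact Finset.mem_Icc.2 ⟨le_rfl, hab⟩
  have h3 : b' ∈ Finset.Icc a b := by rw [← heq]; exact Finset.mem_Icc.2 ⟨hle, le_rfl⟩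
  have h4 : b ∈ Finset.Icc a' b' := by rw [heq]; exact Finset.mem_Icc.2 ⟨hab, le_rfl⟩
  rw [Finset.mem_Icc] at h1 h2 h3 h4
  omega

lemma same_start_sub {n a b d : ℕ} (hb : b ≤ n) (hd : d ≤ n) :
    CSeg n a b ⊆ CSeg n a d ∨ CSeg n a d ⊆ CSeg n a b := by
  unfold CSeg
  split_ifs with h1 h2 h2
  · rcases le_total b d with h | h
    · exact Or.inl (Finset.Icc_subset_Icc le_rfl h)
    · exact Or.inr (Finset.Icc_subset_Icc le_rfl h)
  · exact Or.inl ((Finset.Icc_subset_Icc le_rfl hb).trans Finset.subset_union_left)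
  · exact Or.inr ((Finset.Icc_subset_Icc le_rfl hd).trans Finset.subset_union_left)
  · rcases le_total b d with h | h
    · exact Or.inl (Finset.union_subset_union (subset_refl _) (Finset.Icc_subset_Icc le_rfl h))
    · exact Or.inr (Finset.union_subset_union (subset_refl _) (Finset.Icc_subset_Icc le_rfl h))

lemma overlap_sep {n a b c d : ℕ} (h1 : IsCSeg n a b) (h2 : IsCSeg n c d)
    (hint : (CSeg n a b ∩ CSeg n c d).Nonempty)
    (hs1 : ¬ CSeg n a b ⊆ CSeg n c d) (hs2 : ¬ CSeg n c d ⊆ CSeg n a b) :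
    CSegSeparated n (CSeg n a b) (CSeg n c d) := by
  have hac : a ≠ c := by
    rintro rfl
    rcases same_start_sub h1.2.1 h2.2.1 with h | h
    · exact hs1 h
    · exact hs2 h
  rcases lt_or_gt_of_ne hac with h | h
  · exact ⟨a, b, c, d, h1, h2, rfl, rfl, Or.inl (Or.inl ⟨h, hint, hs1, hs2⟩)⟩
  · refine ⟨a, b, c, d, h1, h2, rfl, rfl, Or.inr (Or.inl ⟨h, ?_, hs2, hs1⟩)⟩
    rwa [Finset.inter_comm]

lemma isCSeg_of_linear {n a b : ℕ} (hab : a ≤ b) (hb : b < n) : IsCSeg n a b := by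
  refine ⟨by omega, by omega, ?_⟩
  rw [cseg_of_le hab, Finset.ssubset_iff_subset_ne]
  constructor
  · intro x hx
    rw [Finset.mem_Icc] at hx
    rw [Finset.mem_range]
    omega
  · intro h
    have : n ∈ Finset.Icc a b := by
      rw [h]; exact Finset.self_mem_range_succ n
    rw [Finset.mem_Icc] at this
    omega

lemma seg_isCSegSet {n : ℕ} (hn : 1 ≤ n) {S : Finset ℕ} (hS : IsSegment (n-1) S) :
    IsCSegSet n S := by
  obtain ⟨a, b, hab, hbn, rfl, _⟩ := hS
  exact ⟨a, b, isCSeg_of_linear hab (by omega), (cseg_of_le hab).symm⟩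

lemma cseg_card_bounds {n a b : ℕ} (h : IsCSeg n a b) :
    1 ≤ (CSeg n a b).card ∧ (CSeg n a b).card ≤ n := by
  constructor
  · exact Finset.card_pos.2 ⟨a, mem_cseg_left h.1⟩
  · have h' := Finset.card_lt_card h.2.2
    rw [Finset.card_range] at h'
    omega

lemma segPrec_cyc {n : ℕ} (hn : 1 ≤ n) {S T : Finset ℕ} (h : SegPrecedes (n-1) S T) :
    ∃ a b c d, IsCSeg n a b ∧ IsCSeg n c d ∧ S = CSeg n a b ∧ T = CSeg n c d ∧
      CPrecedes n a b c d := by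
  obtain ⟨a, b, c, d, hab, hbn, hcd, hdn, hS, hT, h1, h2, h3⟩ := h
  have hb : b < n := by omega
  have hd : d < n := by omega
  refine ⟨a, b, c, d, isCSeg_of_linear hab hb, isCSeg_of_linear hcd hd,
    by rw [hS, cseg_of_le hab], by rw [hT, cseg_of_le hcd], ?_⟩
  rcases Nat.lt_or_ge c (b+1) with hlt | hge
  · refine Or.inl ⟨h1, ⟨c, ?_⟩, ?_, ?_⟩
    · rw [cseg_of_le hab, cseg_of_le hcd, Finset.mem_inter, Finset.mem_Icc, Finset.mem_Icc]
      omega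
    · rw [cseg_of_le hab, cseg_of_le hcd]
      intro hsub
      have := hsub (Finset.mem_Icc.2 ⟨le_rfl, hab⟩)
      rw [Finset.mem_Icc] at this
      omega
    · rw [cseg_of_le hab, cseg_of_le hcd]
      intro hsub
      have := hsub (Finset.mem_Icc.2 ⟨hcd, le_rfl⟩)
      rw [Finset.mem_Icc] at this
      omega
  · refine Or.inr ?_
    show (b + 1) % (n + 1) = c
    rw [Nat.mod_eq_of_lt (by omega)]
    omega

lemma segSep_cycSep {n : ℕ} (hn : 1 ≤ n) {S T : Finset ℕ} (h : SegSeparated (n-1) S T) :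
    CSegSeparated n S T := by
  rcases h with h | h
  · obtain ⟨a, b, c, d, h1, h2, hS, hT, hp⟩ := segPrec_cyc hn h
    exact ⟨a, b, c, d, h1, h2, hS, hT, Or.inl hp⟩
  · obtain ⟨a, b, c, d, h1, h2, hT, hS, hp⟩ := segPrec_cyc hn h
    exact ⟨c, d, a, b, h2, h1, hS, hT, Or.inr hp⟩

lemma cycPrec_seg {n : ℕ} (hn : 2 ≤ n) {a b c d : ℕ}
    (hab : a ≤ b) (hbn : b < n) (hcd : c ≤ d) (hdn : d < n)
    (h : CPrecedes n a b c d) :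
    SegPrecedes (n-1) (Finset.Icc a b) (Finset.Icc c d) := by
  have key : a + 1 ≤ c ∧ c ≤ b + 1 ∧ b < d := by
    rcases h with ⟨hgt, hint, hns1, hns2⟩ | hf
    · rw [cseg_of_le hab, cseg_of_le hcd] at hint hns1 hns2
      obtain ⟨x, hx⟩ := hint
      rw [Finset.mem_inter, Finset.mem_Icc, Finset.mem_Icc] at hx
      have hbd : b < d := by
        by_contra hbd
        exact hns2 (Finset.Icc_subset_Icc (by omega) (by omega))
      omega
    · have hm : (b+1) % (n+1) = b + 1 := Nat.mod_eq_of_lt (by omega)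
      have hf' : (b + 1) % (n + 1) = c := hf
      omega
  exact ⟨a, b, c, d, hab, by omega, hcd, by omega, rfl, rfl, key.1, key.2.1, key.2.2⟩

lemma cycSep_segSep {n : ℕ} (hn : 2 ≤ n) {S T : Finset ℕ}
    (hS : IsSegment (n-1) S) (hT : IsSegment (n-1) T)
    (h : CSegSeparated n S T) : SegSeparated (n-1) S T := by
  obtain ⟨a, b, hab, hbn, rfl, _⟩ := hS
  obtain ⟨c, d, hcd, hdn, rfl, _⟩ := hT
  obtain ⟨a', b', c', d', h1, h2, hSe, hTe, hp⟩ := h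
  obtain ⟨ha, hb⟩ := cseg_uniq h1 hSe.symm hab (by omega)
  obtain ⟨hc, hd⟩ := cseg_uniq h2 hTe.symm hcd (by omega)
  rw [ha, hb, hc, hd] at hp
  rcases hp with hp | hp
  · exact Or.inl (cycPrec_seg hn hab (by omega) hcd (by omega) hp)
  · exact Or.inr (cycPrec_seg hn hcd (by omega) hab (by omega) hp)

lemma range_eq_cseg {n : ℕ} (hn : 2 ≤ n) : Finset.range n = CSeg n 0 (n-1) := by
  rw [cseg_of_le (by omega)]
  ext x
  rw [Finset.mem_range, Finset.mem_Icc]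
  omega

lemma range_isCSeg {n : ℕ} (hn : 2 ≤ n) : IsCSeg n 0 (n-1) :=
  isCSeg_of_linear (by omega) (by omega)

lemma not_sep_Z {n : ℕ} (hn : 2 ≤ n) {S : Finset ℕ} (hS : IsSegment (n-1) S) :
    ¬ CSegSeparated n S (Finset.range n) := by
  obtain ⟨a, b, hab, hbn, rfl, hss⟩ := hS
  rintro ⟨a', b', c', d', h1, h2, hSe, hZe, hp⟩
  have hZ : CSeg n c' d' = Finset.Icc 0 (n-1) := by
    rw [← hZe]
    ext x
    rw [Finset.mem_range, Finset.mem_Icc]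
    omega
  obtain ⟨ha, hb⟩ := cseg_uniq h1 hSe.symm hab (by omega)
  obtain ⟨hc, hd⟩ := cseg_uniq h2 hZ (by omega) (by omega)
  rw [ha, hb, hc, hd] at hp
  rcases hp with hp | hp
  · rcases hp with ⟨hgt, _, _, _⟩ | hfol
    · omega
    · have hm : (b+1) % (n+1) = b+1 := Nat.mod_eq_of_lt (by omega)
      have hf' : (b + 1) % (n + 1) = 0 := hfol
      omega
  · rcases hp with ⟨_, _, _, hns⟩ | hfol
    · apply hns
      rw [cseg_of_le hab, cseg_of_le (by omega : (0:ℕ) ≤ n-1)]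
      exact Finset.Icc_subset_Icc (by omega) (by omega)
    · have hf' : (n - 1 + 1) % (n + 1) = a := hfol
      rw [Nat.mod_eq_of_lt (by omega)] at hf'
      omega

lemma assoc_nonempty (k : ℕ) :
    {m : ℕ | ∃ f : Finset ℕ → ℕ, IsProperColouringAssoc k m f}.Nonempty := by
  have minmax : ∀ a b : ℕ, a ≤ b → ∀ h : (Finset.Icc a b).Nonempty,
      (Finset.Icc a b).min' h = a ∧ (Finset.Icc a b).max' h = b := by
    intro a b hab h
    constructor
    · exact le_antisymm (Finset.min'_le _ a (Finset.mem_Icc.2 ⟨le_rfl, hab⟩))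
        (Finset.le_min' _ _ _ fun y hy => (Finset.mem_Icc.1 hy).1)
    · exact le_antisymm (Finset.max'_le _ _ _ fun y hy => (Finset.mem_Icc.1 hy).2)
        (Finset.le_max' _ b (Finset.mem_Icc.2 ⟨hab, le_rfl⟩))
  refine ⟨1 + ((k+2)*k + k),
    fun S => if h : S.Nonempty then 1 + ((k+2) * S.min' h + S.max' h) else 0, ?_, ?_⟩
  · intro S hS
    obtain ⟨a, b, hab, hbk, rfl, _⟩ := hS
    have hne : (Finset.Icc a b).Nonempty := Finset.nonempty_Icc.2 hab
    obtain ⟨hmin, hmax⟩ := minmax a b hab hne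
    show (if h : (Finset.Icc a b).Nonempty then
        1 + ((k + 2) * (Finset.Icc a b).min' h + (Finset.Icc a b).max' h) else 0) ∈
      Finset.Icc 1 (1 + ((k+2)*k + k))
    rw [dif_pos hne, hmin, hmax, Finset.mem_Icc]
    have : (k+2)*a ≤ (k+2)*k := Nat.mul_le_mul_left _ (by omega)
    omega
  · intro S T hS hT hne hcol
    exfalso
    apply hne
    obtain ⟨a, b, hab, hbk, rfl, _⟩ := hS
    obtain ⟨c, d, hcd, hdk, rfl, _⟩ := hT
    have hne1 : (Finset.Icc a b).Nonempty := Finset.nonempty_Icc.2 hab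
    have hne2 : (Finset.Icc c d).Nonempty := Finset.nonempty_Icc.2 hcd
    obtain ⟨hmin1, hmax1⟩ := minmax a b hab hne1
    obtain ⟨hmin2, hmax2⟩ := minmax c d hcd hne2
    have hcol' : (if h : (Finset.Icc a b).Nonempty then
          1 + ((k + 2) * (Finset.Icc a b).min' h + (Finset.Icc a b).max' h) else 0) =
        (if h : (Finset.Icc c d).Nonempty then
          1 + ((k + 2) * (Finset.Icc c d).min' h + (Finset.Icc c d).max' h) else 0) := hcol
    rw [dif_pos hne1, dif_pos hne2, hmin1, hmax1, hmin2, hmax2] at hcol'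
    have hbase : (k+2)*a + b = (k+2)*c + d := by omega
    have hmod : ((k+2)*a + b) % (k+2) = ((k+2)*c + d) % (k+2) := by rw [hbase]
    rw [Nat.mul_add_mod, Nat.mul_add_mod, Nat.mod_eq_of_lt (by omega),
      Nat.mod_eq_of_lt (by omega)] at hmod
    have hac : (k+2)*a = (k+2)*c := by omega
    have ha : a = c := Nat.eq_of_mul_eq_mul_left (by omega) hac
    rw [ha, hmod]

lemma special_inter {n : ℕ} (hn : 2 ≤ n) {X Y : Finset ℕ}
    (hX : X ⊂ Finset.range (n+1)) (hY : Y ⊂ Finset.range (n+1))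
    (hXs : n ∈ X ∨ X = Finset.range n) (hYs : n ∈ Y ∨ Y = Finset.range n)
    (hcard : X.card = Y.card) (hne : X ≠ Y) : (X ∩ Y).Nonempty := by
  have count : ∀ A B : Finset ℕ, A ⊂ Finset.range (n+1) → B ⊂ Finset.range (n+1) →
      A.card = n → B.card = n → (A ∩ B).Nonempty := by
    intro A B hA hB hcA hcB
    have hu : (A ∪ B).card ≤ n + 1 := by
      have : A ∪ B ⊆ Finset.range (n+1) := Finset.union_subset hA.subset hB.subset
      calc (A ∪ B).card ≤ (Finset.range (n+1)).card := Finset.card_le_card this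
        _ = n + 1 := Finset.card_range _
    have hsum := Finset.card_union_add_card_inter A B
    rw [← Finset.card_pos]
    omega
  rcases hXs with hX1 | hXe
  · rcases hYs with hY1 | hYe
    · exact ⟨n, Finset.mem_inter.2 ⟨hX1, hY1⟩⟩
    · have hcY : Y.card = n := by rw [hYe, Finset.card_range]
      exact count X Y hX hY (by omega) hcY
  · rcases hYs with hY1 | hYe
    · have hcX : X.card = n := by rw [hXe, Finset.card_range]
      exact count X Y hX hY hcX (by omega)
    · exact absurd (hXe.trans hYe.symm) hne

lemma upper_colouring {n : ℕ} (hn : 2 ≤ n) {m₀ : ℕ} {g : Finset ℕ → ℕ}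
    (hg : IsProperColouringAssoc (n-1) m₀ g) :
    IsProperColouringCyclo n (m₀ + n)
      (fun X => if n ∈ X ∨ X = Finset.range n then m₀ + X.card else g X) := by
  have hlin : ∀ X : Finset ℕ, IsCSegSet n X → ¬(n ∈ X ∨ X = Finset.range n) →
      IsSegment (n-1) X := by
    rintro X ⟨a, b, ⟨han, hbn, hss⟩, rfl⟩ h
    push_neg at h
    obtain ⟨h1, h2⟩ := h
    have hab : a ≤ b := by
      by_contra hc
      exact h1 (n_mem_cseg_wrap hc han)
    rw [cseg_of_le hab] at h1 h2 ⊢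
    have hb : b < n := by
      rcases Nat.lt_or_ge b n with h | h
      · exact h
      · exfalso
        exact h1 (Finset.mem_Icc.2 ⟨by omega, by omega⟩)
    refine ⟨a, b, hab, by omega, rfl, ?_⟩
    have hrew : (n-1)+1 = n := by omega
    rw [hrew, Finset.ssubset_iff_subset_ne]
    refine ⟨fun x hx => ?_, h2⟩
    rw [Finset.mem_Icc] at hx
    rw [Finset.mem_range]
    omega
  constructor
  · intro X hX
    show (if n ∈ X ∨ X = Finset.range n then m₀ + X.card else g X) ∈ Finset.Icc 1 (m₀ + n)
    by_cases hsp : n ∈ X ∨ X = Finset.range n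
    · rw [if_pos hsp]
      obtain ⟨a, b, hc, rfl⟩ := hX
      obtain ⟨hc1, hc2⟩ := cseg_card_bounds hc
      rw [Finset.mem_Icc]
      omega
    · rw [if_neg hsp, Finset.mem_Icc]
      have := hg.1 X (hlin X hX hsp)
      rw [Finset.mem_Icc] at this
      omega
  · intro X Y hX hY hne hcol
    have hcol2 : (if n ∈ X ∨ X = Finset.range n then m₀ + X.card else g X) =
        (if n ∈ Y ∨ Y = Finset.range n then m₀ + Y.card else g Y) := hcol
    clear hcol
    by_cases hsX : n ∈ X ∨ X = Finset.range n
    · by_cases hsY : n ∈ Y ∨ Y = Finset.range n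
      · rw [if_pos hsX, if_pos hsY] at hcol2
        have hcard : X.card = Y.card := by omega
        obtain ⟨a, b, h1, rfl⟩ := hX
        obtain ⟨c, d, h2, rfl⟩ := hY
        refine overlap_sep h1 h2 (special_inter hn h1.2.2 h2.2.2 hsX hsY hcard hne) ?_ ?_
        · intro hsub
          exact hne (Finset.eq_of_subset_of_card_le hsub (by omega))
        · intro hsub
          exact hne (Finset.eq_of_subset_of_card_le hsub (by omega)).symm
      · exfalso
        rw [if_pos hsX, if_neg hsY] at hcol2
        have hgY := hg.1 Y (hlin Y hY hsY)
        rw [Finset.mem_Icc] at hgY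
        obtain ⟨a, b, h1, rfl⟩ := hX
        obtain ⟨hc1, hc2⟩ := cseg_card_bounds h1
        omega
    · by_cases hsY : n ∈ Y ∨ Y = Finset.range n
      · exfalso
        rw [if_neg hsX, if_pos hsY] at hcol2
        have hgX := hg.1 X (hlin X hX hsX)
        rw [Finset.mem_Icc] at hgX
        obtain ⟨c, d, h2, rfl⟩ := hY
        obtain ⟨hc1, hc2⟩ := cseg_card_bounds h2
        omega
      · rw [if_neg hsX, if_neg hsY] at hcol2
        exact segSep_cycSep (by omega)
          (hg.2 X Y (hlin X hX hsX) (hlin Y hY hsY) hne hcol2)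


/-- Proposition: `α_{n−1} + 1 ≤ γ_n ≤ α_{n−1} + n` for every `n ≥ 2`. -/
theorem cycloChromatic_bounds (n : ℕ) (hn : 2 ≤ n) :
    assocChromatic (n - 1) + 1 ≤ cycloChromatic n ∧
      cycloChromatic n ≤ assocChromatic (n - 1) + n := by
  have hm₀ : assocChromatic (n-1) ∈
      {m : ℕ | ∃ f : Finset ℕ → ℕ, IsProperColouringAssoc (n-1) m f} := by
    unfold assocChromatic
    exact Nat.sInf_mem (assoc_nonempty (n-1))
  obtain ⟨g, hg⟩ := hm₀
  have hupper_mem : (assocChromatic (n-1) + n) ∈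
      {m : ℕ | ∃ f : Finset ℕ → ℕ, IsProperColouringCyclo n m f} :=
    ⟨_, upper_colouring hn hg⟩
  have hupper : cycloChromatic n ≤ assocChromatic (n-1) + n := by
    unfold cycloChromatic
    exact Nat.sInf_le hupper_mem
  have hγmem : cycloChromatic n ∈
      {m : ℕ | ∃ f : Finset ℕ → ℕ, IsProperColouringCyclo n m f} := by
    unfold cycloChromatic
    exact Nat.sInf_mem ⟨_, hupper_mem⟩
  obtain ⟨f, hf⟩ := hγmem
  have hZcs : IsCSegSet n (Finset.range n) := ⟨0, n-1, range_isCSeg hn, range_eq_cseg hn⟩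
  have hγ1 : 1 ≤ cycloChromatic n := by
    have := hf.1 _ hZcs
    rw [Finset.mem_Icc] at this
    omega
  have hSneZ : ∀ S : Finset ℕ, IsSegment (n-1) S → S ≠ Finset.range n := by
    intro S hS
    obtain ⟨a, b, hab, hbn, rfl, hss⟩ := hS
    have h1 : (n-1)+1 = n := by omega
    rw [h1] at hss
    exact (Finset.ssubset_iff_subset_ne.1 hss).2
  have hkey : ∀ S : Finset ℕ, IsSegment (n-1) S → f S ≠ f (Finset.range n) := by
    intro S hS hcol
    exact not_sep_Z hn hS
      (hf.2 S _ (seg_isCSegSet (by omega) hS) hZcs (hSneZ S hS) hcol)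
  have hmem : (cycloChromatic n - 1) ∈
      {m : ℕ | ∃ g' : Finset ℕ → ℕ, IsProperColouringAssoc (n-1) m g'} := by
    refine ⟨fun S => if f S < f (Finset.range n) then f S else f S - 1, ?_, ?_⟩
    · intro S hS
      have h1 := hf.1 S (seg_isCSegSet (by omega) hS)
      have h2 := hf.1 _ hZcs
      have h3 := hkey S hS
      rw [Finset.mem_Icc] at h1 h2
      show (if f S < f (Finset.range n) then f S else f S - 1) ∈
        Finset.Icc 1 (cycloChromatic n - 1)
      rw [Finset.mem_Icc]
      split_ifs with h <;> omega
    · intro S T hS hT hne hcol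
      have hcol2 : (if f S < f (Finset.range n) then f S else f S - 1) =
          (if f T < f (Finset.range n) then f T else f T - 1) := hcol
      have h3S := hkey S hS
      have h3T := hkey T hT
      have h1 := hf.1 S (seg_isCSegSet (by omega) hS)
      have h2 := hf.1 T (seg_isCSegSet (by omega) hT)
      rw [Finset.mem_Icc] at h1 h2
      have hfeq : f S = f T := by
        split_ifs at hcol2 <;> omega
      exact cycSep_segSep hn hS hT
        (hf.2 S T (seg_isCSegSet (by omega) hS) (seg_isCSegSet (by omega) hT) hne hfeq)
  have hlow : assocChromatic (n-1) ≤ cycloChromatic n - 1 := by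
    unfold assocChromatic
    exact Nat.sInf_le hmem
  exact ⟨by omega, hupper⟩
end
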